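/- For every n ≥ 1, the sentence SomeTotalR_n is logically equivalent to a Σ_{2n+1} sentence. -/

import Mathlib

open FirstOrder Language

namespace Paper

variable {L : FirstOrder.Language} {α : Type*}

/-! ### Prefix classes `Σ_{n,k}` and `Π_{n,k}` -/

/-- Prepend a block of `j` existential quantifiers to a bounded formula. -/
def exN : ∀ (j : ℕ) {m : ℕ}, L.BoundedFormula α (m + j) → L.BoundedFormula α m
  | 0, _, φ => φ
  | j + 1, _, φ => exN j φ.ex

/-- Prepend a block of `j` universal quantifiers to a bounded formula. -/
def allN : ∀ (j : ℕ) {m : ℕ}, L.BoundedFormula α (m + j) → L.BoundedFormula α m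
  | 0, _, φ => φ
  | j + 1, _, φ => allN j φ.all

/-- `IsSigmaPi k b n m φ` says that the formula `φ` is in prenex form with at most `n`
alternating blocks of at most `k` quantifiers, starting with an existential block when
`b = true` (the class `Σ_{n,k}`) and with a universal block when `b = false` (`Π_{n,k}`). -/
def IsSigmaPi (k : ℕ) : Bool → ℕ → ∀ m : ℕ, L.BoundedFormula α m → Prop
  | _, 0, _, φ => φ.IsQF
  | b, n + 1, m, φ =>
      IsSigmaPi k (!b) n m φ ∨
        ∃ j : ℕ, j ≤ k ∧ ∃ ψ : L.BoundedFormula α (m + j),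
          IsSigmaPi k (!b) n (m + j) ψ ∧ φ = if b then exN j ψ else allN j ψ

/-- `φ` is a `Σ_{n,k}` formula. -/
abbrev IsSigma (n k : ℕ) {m : ℕ} (φ : L.BoundedFormula α m) : Prop :=
  IsSigmaPi k true n m φ

/-- `φ` is a `Π_{n,k}` formula. -/
abbrev IsPi (n k : ℕ) {m : ℕ} (φ : L.BoundedFormula α m) : Prop :=
  IsSigmaPi k false n m φ

/-! ### The relations `⇛_{n,k}` and `≡_{n,k}` -/

/-- `A ⇛_{n,k} B` : every `Σ_{n,k}` sentence true in `A` is true in `B`. -/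
def SigImp (L : FirstOrder.Language) (n k : ℕ) (A : Type*) (B : Type*)
    [L.Structure A] [L.Structure B] : Prop :=
  ∀ φ : L.Sentence, IsSigma n k φ → A ⊨ φ → B ⊨ φ

/-- `A ≡_{n,k} B`. -/
def SigEquiv (L : FirstOrder.Language) (n k : ℕ) (A : Type*) (B : Type*)
    [L.Structure A] [L.Structure B] : Prop :=
  SigImp L n k A B ∧ SigImp L n k B A

/-- `(A, ā) ⇛_{n,k} (B, b̄)` : every `Σ_{n,k}` formula satisfied by `ā` in `A` is satisfied
by `b̄` in `B`. -/
def SigImpT (L : FirstOrder.Language) (n k : ℕ) {l : ℕ} (A : Type*) [L.Structure A]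
    (a : Fin l → A) (B : Type*) [L.Structure B] (b : Fin l → B) : Prop :=
  ∀ φ : L.Formula (Fin l), IsSigma n k φ → φ.Realize a → φ.Realize b

/-! ### Quantifier rank -/

/-- The quantifier rank of a formula. -/
def qrank : ∀ {m : ℕ}, L.BoundedFormula α m → ℕ
  | _, BoundedFormula.falsum => 0
  | _, BoundedFormula.equal _ _ => 0
  | _, BoundedFormula.rel _ _ => 0
  | _, BoundedFormula.imp f g => max (qrank f) (qrank g)
  | _, BoundedFormula.all f => qrank f + 1

/-- `A ≡_m B` : `A` and `B` satisfy the same sentences of quantifier rank at most `m`. -/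
def RankEquiv (L : FirstOrder.Language) (m : ℕ) (A : Type*) (B : Type*)
    [L.Structure A] [L.Structure B] : Prop :=
  ∀ φ : L.Sentence, qrank φ ≤ m → (A ⊨ φ ↔ B ⊨ φ)

/-! ### Ordered structures -/

/-- The interpretation of a distinguished binary relation symbol. -/
def rle (le : L.Relations 2) {A : Type*} [L.Structure A] (x y : A) : Prop :=
  Structure.RelMap le ![x, y]

/-- The distinguished binary relation symbol `le` is interpreted as a linear order. -/
def IsOrderedLe (le : L.Relations 2) (A : Type*) [L.Structure A] : Prop :=
  (∀ x : A, rle le x x) ∧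
    (∀ x y : A, rle le x y → rle le y x → x = y) ∧
    (∀ x y z : A, rle le x y → rle le y z → rle le x z) ∧
    (∀ x y : A, rle le x y ∨ rle le y x)

/-- `x` is the minimum element w.r.t. the interpretation of `le`. -/
def IsMinimal (le : L.Relations 2) {A : Type*} [L.Structure A] (x : A) : Prop :=
  ∀ y, rle le x y

/-- `x` is the maximum element w.r.t. the interpretation of `le`. -/
def IsMaximal (le : L.Relations 2) {A : Type*} [L.Structure A] (x : A) : Prop :=
  ∀ y, rle le y x

/-- The function `ρ`: `ρ(1,k) = 2k+2` and `ρ(n+1,k) = (k+2)(ρ(n,k)+1)`. -/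
def rho : ℕ → ℕ → ℕ
  | 0, _ => 0
  | 1, k => 2 * k + 2
  | n + 2, k => (k + 2) * (rho (n + 1) k + 1)

/-! ### Starred structures:  `A*` is `A` with constants for its min and max elements.
Satisfaction of (prefix-class) sentences of the enlarged vocabulary in `A*` corresponds to
satisfaction of (prefix-class) formulas in two extra free variables, instantiated to the
minimum and the maximum. -/

/-- `A* ⇛_{n,k} B*`. -/
def SigImpStar (L : FirstOrder.Language) (n k : ℕ) (A : Type*) [L.Structure A]
    (mnA mxA : A) (B : Type*) [L.Structure B] (mnB mxB : B) : Prop :=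
  SigImpT L n k A ![mnA, mxA] B ![mnB, mxB]

/-- The tuple `ā` extended by the two distinguished constants. -/
def starT {A : Type*} {l : ℕ} (a : Fin l → A) (mn mx : A) : Fin (l + 2) → A :=
  Fin.append a ![mn, mx]

/-- `(A, ā)* ⇛_{n,k} (B, b̄)*`. -/
def SigImpTStar (L : FirstOrder.Language) (n k : ℕ) {l : ℕ} (A : Type*) [L.Structure A]
    (a : Fin l → A) (mnA mxA : A) (B : Type*) [L.Structure B] (b : Fin l → B)
    (mnB mxB : B) : Prop :=
  SigImpT L n k A (starT a mnA mxA) B (starT b mnB mxB)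

/-! ### Ordered sums -/

/-- `C`, together with the inclusion maps `f : A → C` and `g : B → C`, is the ordered sum
`A ⊕ B`: the maximum of `A` is identified with the minimum of `B`, the order places `A`
below `B`, and every other relation symbol is interpreted by the union of its
interpretations. -/
structure IsOrderedSum2 (L : FirstOrder.Language) (le : L.Relations 2)
    (A B C : Type*) [L.Structure A] [L.Structure B] [L.Structure C]
    (mxA : A) (mnB : B) (f : A → C) (g : B → C) : Prop where
  injf : Function.Injective f
  injg : Function.Injective g
  cover : ∀ c : C, (∃ a, f a = c) ∨ (∃ b, g b = c)
  glue : f mxA = g mnB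
  overlap : ∀ a b, f a = g b → a = mxA ∧ b = mnB
  le_iff : ∀ c c' : C, rle le c c' ↔
      ((∃ a a', f a = c ∧ f a' = c' ∧ rle le a a') ∨
       (∃ b b', g b = c ∧ g b' = c' ∧ rle le b b') ∨
       (∃ a b, f a = c ∧ g b = c'))
  rel_iff : ∀ (m : ℕ) (r : L.Relations m) (v : Fin m → C), ¬(m = 2 ∧ HEq r le) →
      (Structure.RelMap r v ↔
        (∃ w : Fin m → A, (∀ p, f (w p) = v p) ∧ Structure.RelMap r w) ∨
        (∃ w : Fin m → B, (∀ p, g (w p) = v p) ∧ Structure.RelMap r w))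

/-- `C`, together with the inclusion maps `f i : M i → C`, is the iterated ordered sum
`⊕_{i} M i` (where `mn i`/`mx i` are the minimum/maximum of `M i`). -/
structure IsOrderedSumSeq (L : FirstOrder.Language) (le : L.Relations 2) (s : ℕ)
    (M : Fin s → Type*) [∀ i, L.Structure (M i)] (mn mx : ∀ i, M i)
    (C : Type*) [L.Structure C] (f : ∀ i, M i → C) : Prop where
  inj : ∀ i, Function.Injective (f i)
  cover : ∀ c : C, ∃ i a, f i a = c
  glue : ∀ (i : Fin s) (h : i.1 + 1 < s), f i (mx i) = f ⟨i.1 + 1, h⟩ (mn ⟨i.1 + 1, h⟩)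
  overlap : ∀ (i j : Fin s) (a : M i) (b : M j), i < j → f i a = f j b →
      j.1 = i.1 + 1 ∧ a = mx i ∧ b = mn j
  le_iff : ∀ c c' : C, rle le c c' ↔
      ((∃ i a b, f i a = c ∧ f i b = c' ∧ rle le a b) ∨
       (∃ i j a b, i < j ∧ f i a = c ∧ f j b = c'))
  rel_iff : ∀ (m : ℕ) (r : L.Relations m) (v : Fin m → C), ¬(m = 2 ∧ HEq r le) →
      (Structure.RelMap r v ↔
        ∃ i, ∃ w : Fin m → M i, (∀ p, f i (w p) = v p) ∧ Structure.RelMap r w)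

/-! ### The (n,k)-prefix Ehrenfeucht–Fraïssé game -/

/-- The history of the play before round `i`. -/
def histOf {A B : Type*} {k : ℕ} (n : ℕ) (a : Fin n → Fin k → A) (b : Fin n → Fin k → B)
    (i : Fin n) : List ((Fin k → A) × (Fin k → B)) :=
  List.ofFn (fun j : Fin i.1 => (a ⟨j.1, j.2.trans i.2⟩, b ⟨j.1, j.2.trans i.2⟩))

/-- A strategy for Duplicator: responses to Spoiler moves in `A` and in `B`,
given the history of earlier rounds. -/
structure DupStrategy (L : FirstOrder.Language) (k : ℕ) (A B : Type*)
    [L.Structure A] [L.Structure B] where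
  respB : List ((Fin k → A) × (Fin k → B)) → (Fin k → A) → (Fin k → B)
  respA : List ((Fin k → A) × (Fin k → B)) → (Fin k → B) → (Fin k → A)

/-- A play `(a, b)` of the `(n,k)`-prefix EF game is consistent with Duplicator's strategy:
in odd rounds (`i.1` even) Spoiler moves in `A` and Duplicator responds in `B`, in even
rounds Spoiler moves in `B` and Duplicator responds in `A`. -/
def DupStrategy.Consistent {A B : Type*} [L.Structure A] [L.Structure B] {k : ℕ}
    (st : DupStrategy L k A B) (n : ℕ)
    (a : Fin n → Fin k → A) (b : Fin n → Fin k → B) : Prop :=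
  ∀ i : Fin n,
    (i.1 % 2 = 0 → b i = st.respB (histOf n a b i) (a i)) ∧
    (i.1 % 2 = 1 → a i = st.respA (histOf n a b i) (b i))

/-- The map sending `a` pointwise to `b` is a partial isomorphism (for a relational
language). -/
def IsPartialIso (L : FirstOrder.Language) {ι : Type*} (A B : Type*)
    [L.Structure A] [L.Structure B] (a : ι → A) (b : ι → B) : Prop :=
  (∀ p q : ι, a p = a q ↔ b p = b q) ∧
    ∀ (m : ℕ) (r : L.Relations m) (v : Fin m → ι),
      (Structure.RelMap r (a ∘ v) ↔ Structure.RelMap r (b ∘ v))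

/-- Duplicator's strategy is winning in the `(n,k)`-prefix EF game. -/
def DupStrategy.Winning {A B : Type*} [L.Structure A] [L.Structure B] {k : ℕ}
    (st : DupStrategy L k A B) (n : ℕ) : Prop :=
  ∀ (a : Fin n → Fin k → A) (b : Fin n → Fin k → B), st.Consistent n a b →
    IsPartialIso L A B (fun p : Fin n × Fin k => a p.1 p.2) (fun p : Fin n × Fin k => b p.1 p.2)


/-! ### The vocabularies `σ_n` -/

/-- Indices `i` with `2 ≤ i ≤ n`, indexing the symbols `P_i, S_i, R_i` of `σ_n`. -/
abbrev HighIdx (n : ℕ) : Type := {i : ℕ // 2 ≤ i ∧ i ≤ n}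

/-- The vocabulary `σ_n`: binary symbols `≤, S, R` and `S_i, R_i` (for `2 ≤ i ≤ n`),
and unary symbols `P_i` (for `2 ≤ i ≤ n`).  In particular `σ_1` has exactly the three
binary symbols `≤, S, R`. -/
def sig (n : ℕ) : FirstOrder.Language where
  Functions := fun _ => Empty
  Relations := fun m =>
    match m with
    | 1 => HighIdx n
    | 2 => (Fin 3) ⊕ (HighIdx n × Bool)
    | _ => Empty

/-- The symbol `≤` of `σ_n`. -/
def leSym (n : ℕ) : (sig n).Relations 2 := Sum.inl 0
/-- The symbol `S` of `σ_n`. -/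
def sSym (n : ℕ) : (sig n).Relations 2 := Sum.inl 1
/-- The symbol `R` of `σ_n`. -/
def rSym (n : ℕ) : (sig n).Relations 2 := Sum.inl 2
/-- The symbol `S_i` of `σ_n`. -/
def snSym (n i : ℕ) (h : 2 ≤ i ∧ i ≤ n) : (sig n).Relations 2 := Sum.inr (⟨i, h⟩, false)
/-- The symbol `R_i` of `σ_n`. -/
def rnSym (n i : ℕ) (h : 2 ≤ i ∧ i ≤ n) : (sig n).Relations 2 := Sum.inr (⟨i, h⟩, true)
/-- The symbol `P_i` of `σ_n`. -/
def pnSym (n i : ℕ) (h : 2 ≤ i ∧ i ≤ n) : (sig n).Relations 1 := ⟨i, h⟩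

/-! ### Semantics of the sentences `SomeTotalR_n` -/

/-- A bundle of interpretations of all the symbols of the vocabularies `σ_n` over a
universe `A`. -/
structure Interp (A : Type*) where
  le : A → A → Prop
  S : A → A → Prop
  R : A → A → Prop
  Sn : ℕ → A → A → Prop
  Rn : ℕ → A → A → Prop
  Pn : ℕ → A → Prop

variable {A : Type*}

/-- `x < y` as an abbreviation for `x ≤ y ∧ x ≠ y`. -/
def Interp.lt (I : Interp A) (x y : A) : Prop := I.le x y ∧ x ≠ y

/-- `STR I m D` is the meaning of the sentence `SomeTotalR_{m+1}` with all quantifiers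
relativized to the set `D`.
For `m = 0`: `¬PartialSucc ∨ ∃ x y (R(x,y) ∧ Total(x,y))` where `PartialSucc` says that
`S(x,y)` implies `y` is the immediate `≤`-successor of `x`, and `Total(x,y)` says that
`x < y` and every `z` in `[x,y)` has an `S`-successor within `(z,y]`.
For `m+1` (i.e. `SomeTotalR_n`, `n = m+2`): the same with `S` replaced by
`Succ_n(x,y) := P_n(x) ∧ P_n(y) ∧ S_n(x,y) ∧ (SomeTotalR_{n-1})^{[x,y]}`, the quantifier
in `PartialSucc_n` and `Total_n` relativized to `P_n`, and `R` replaced by `R_n`. -/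
def STR (I : Interp A) : ℕ → (A → Prop) → Prop
  | 0, D =>
      (¬ ∀ x y, D x → D y → I.S x y →
          (I.lt x y ∧ ∀ z, D z → ¬(I.lt x z ∧ I.lt z y))) ∨
      ∃ x y, D x ∧ D y ∧ I.R x y ∧
        (I.lt x y ∧ ∀ z, D z → I.le x z → I.lt z y →
          ∃ w, D w ∧ I.lt z w ∧ I.le w y ∧ I.S z w)
  | m + 1, D =>
      let nn := m + 2
      let Succn : A → A → Prop := fun x y =>
        I.Pn nn x ∧ I.Pn nn y ∧ I.Sn nn x y ∧
          (I.le x y ∧ STR I m (fun z => D z ∧ I.le x z ∧ I.le z y))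
      (¬ ∀ x y, D x → D y → Succn x y →
          ∀ z, D z → I.Pn nn z → I.le z x ∨ I.le y z) ∨
      ∃ x y, D x ∧ D y ∧ I.Rn nn x y ∧
        (I.lt x y ∧ ∀ z, D z → I.Pn nn z → I.le x z → I.lt z y →
          ∃ w, D w ∧ I.lt z w ∧ I.le w y ∧ Succn z w)

/-- The meaning of the sentence `SomeTotalR_n` (for `n ≥ 1`). -/
def SomeTotalRSem (n : ℕ) (I : Interp A) : Prop :=
  STR I (n - 1) (fun _ => True)

/-- The interpretation bundle determined by a `σ_n`-structure. -/
def interpOf (n : ℕ) (A : Type*) [(sig n).Structure A] : Interp A where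
  le := fun x y => FirstOrder.Language.Structure.RelMap (leSym n) ![x, y]
  S := fun x y => FirstOrder.Language.Structure.RelMap (sSym n) ![x, y]
  R := fun x y => FirstOrder.Language.Structure.RelMap (rSym n) ![x, y]
  Sn := fun i x y => ∃ h : 2 ≤ i ∧ i ≤ n,
    FirstOrder.Language.Structure.RelMap (snSym n i h) ![x, y]
  Rn := fun i x y => ∃ h : 2 ≤ i ∧ i ≤ n,
    FirstOrder.Language.Structure.RelMap (rnSym n i h) ![x, y]
  Pn := fun i x => ∃ h : 2 ≤ i ∧ i ≤ n,
    FirstOrder.Language.Structure.RelMap (pnSym n i h) ![x]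

/-- The `σ_n`-structure determined by an interpretation bundle. -/
def strOf (n : ℕ) {A : Type*} (I : Interp A) : (sig n).Structure A where
  funMap := fun {m} f _ => Empty.elim f
  RelMap := fun {m} =>
    match m with
    | 0 => fun r _ => Empty.elim r
    | 1 => fun r v => I.Pn r.1 (v 0)
    | 2 => fun r v =>
        match r with
        | Sum.inl i =>
            if i = 0 then I.le (v 0) (v 1)
            else if i = 1 then I.S (v 0) (v 1) else I.R (v 0) (v 1)
        | Sum.inr (j, b) => if b then I.Rn j.1 (v 0) (v 1) else I.Sn j.1 (v 0) (v 1)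
    | _ + 3 => fun r _ => Empty.elim r

/-! ### Concrete construction of the structures `Tot_{n,k}`, `Gap_{n,k}`, `M_{n,k}`, `N_{n,k}` -/

/-- A finite ordered `σ`-interpretation with universe `{0, …, last}` (i.e. `Fin (last+1)`),
where `≤` is the natural linear order; the remaining relations are given as predicates on
the underlying natural numbers. -/
structure NInterp where
  last : ℕ
  S : ℕ → ℕ → Prop
  R : ℕ → ℕ → Prop
  Sn : ℕ → ℕ → ℕ → Prop
  Rn : ℕ → ℕ → ℕ → Prop
  Pn : ℕ → ℕ → Prop

/-- The universe of an `NInterp`. -/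
abbrev NInterp.Carrier (I : NInterp) : Type := Fin (I.last + 1)

/-- The interpretation bundle of an `NInterp`. -/
def NInterp.toInterp (I : NInterp) : Interp I.Carrier where
  le := fun x y => x ≤ y
  S := fun x y => I.S x.1 y.1
  R := fun x y => I.R x.1 y.1
  Sn := fun i x y => I.Sn i x.1 y.1
  Rn := fun i x y => I.Rn i x.1 y.1
  Pn := fun i x => I.Pn i x.1

/-- The ordered sum of two `NInterp`s: the maximum (`I.last`) of the first is identified
with the minimum (`0`) of the second, and all relations other than `≤` are unions. -/
def glue2 (I J : NInterp) : NInterp where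
  last := I.last + J.last
  S := fun x y => I.S x y ∨ ∃ a b, J.S a b ∧ x = I.last + a ∧ y = I.last + b
  R := fun x y => I.R x y ∨ ∃ a b, J.R a b ∧ x = I.last + a ∧ y = I.last + b
  Sn := fun i x y => I.Sn i x y ∨ ∃ a b, J.Sn i a b ∧ x = I.last + a ∧ y = I.last + b
  Rn := fun i x y => I.Rn i x y ∨ ∃ a b, J.Rn i a b ∧ x = I.last + a ∧ y = I.last + b
  Pn := fun i x => I.Pn i x ∨ ∃ a, J.Pn i a ∧ x = I.last + a

/-- Iterated ordered sum `I ⊕ J₁ ⊕ ⋯ ⊕ Jₘ`. -/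
def glueList : NInterp → List NInterp → NInterp
  | I, [] => I
  | I, J :: rest => glueList (glue2 I J) rest

/-- The ordered sum of `c` copies of `I` (for `c ≥ 1`). -/
def glueRep (I : NInterp) (c : ℕ) : NInterp :=
  glueList I (List.replicate (c - 1) I)

/-- `Tot_{1,k}` : universe of size `m = 6(k+2)²`, `S` the full successor relation,
`R = {(min, max)}`. -/
def Tot1 (k : ℕ) : NInterp where
  last := 6 * (k + 2) ^ 2 - 1
  S := fun x y => y = x + 1
  R := fun x y => x = 0 ∧ y = 6 * (k + 2) ^ 2 - 1
  Sn := fun _ _ _ => False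
  Rn := fun _ _ _ => False
  Pn := fun _ _ => False

/-- `Gap_{1,k}` : as `Tot_{1,k}` but with the central successor pair
`(m/2, m/2+1)` (1-indexed) removed from `S`. -/
def Gap1 (k : ℕ) : NInterp where
  last := 6 * (k + 2) ^ 2 - 1
  S := fun x y => y = x + 1 ∧ y ≠ 3 * (k + 2) ^ 2
  R := fun x y => x = 0 ∧ y = 6 * (k + 2) ^ 2 - 1
  Sn := fun _ _ _ => False
  Rn := fun _ _ _ => False
  Pn := fun _ _ => False

/-- The expansion `A ↦ A⁺` from `σ_{n-1}` to `σ_n`: `P_n = {min, max}`,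
`S_n = {(min, max)}`, `R_n = ∅`. -/
def plusN (n : ℕ) (I : NInterp) : NInterp where
  last := I.last
  S := I.S
  R := I.R
  Sn := fun i x y => I.Sn i x y ∨ (i = n ∧ x = 0 ∧ y = I.last)
  Rn := I.Rn
  Pn := fun i x => I.Pn i x ∨ (i = n ∧ (x = 0 ∨ x = I.last))

/-- Add the pair `(min, max)` to the relation `R_n`. -/
def addRn (n : ℕ) (I : NInterp) : NInterp :=
  { I with Rn := fun i x y => I.Rn i x y ∨ (i = n ∧ x = 0 ∧ y = I.last) }

/-- `fam m k = (Tot_{m+1,k}, Gap_{m+1,k}, M_{m+1,k}, N_{m+1,k})`, by the inductive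
construction:
* `N_{n,k}` is the ordered sum of `4(k+3)^{2n+1} + 2k + 1` copies of `Gap_{n,k}` and
  `M_{n,k}` is obtained from it by replacing the central copy with `Tot_{n,k}`;
* for `n ≥ 2`, `Tot_{n,k}` is obtained from the ordered sum of `4(k+3)^{2n} + 2k + 1`
  copies of `M⁺_{n-1,k}` by adding `(min, max)` to `R_n`, and `Gap_{n,k}` is obtained from
  it by replacing the central copy with `N⁺_{n-1,k}`. -/
def fam : ℕ → ℕ → NInterp × NInterp × NInterp × NInterp
  | 0, k =>
      let T := Tot1 k
      let G := Gap1 k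
      let half := 2 * (k + 3) ^ 3 + k
      (T, G,
        glueList (glueRep G half) (T :: List.replicate half G),
        glueRep G (4 * (k + 3) ^ 3 + 2 * k + 1))
  | m + 1, k =>
      let p := fam m k
      let nn := m + 2
      let Mp := plusN nn p.2.2.1
      let Np := plusN nn p.2.2.2
      let halfT := 2 * (k + 3) ^ (2 * nn) + k
      let T := addRn nn (glueRep Mp (4 * (k + 3) ^ (2 * nn) + 2 * k + 1))
      let G := addRn nn (glueList (glueRep Mp halfT) (Np :: List.replicate halfT Mp))
      let halfN := 2 * (k + 3) ^ (2 * nn + 1) + k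
      (T, G,
        glueList (glueRep G halfN) (T :: List.replicate halfN G),
        glueRep G (4 * (k + 3) ^ (2 * nn + 1) + 2 * k + 1))

/-- The structure `Tot_{n,k}`. -/
def TotNK (n k : ℕ) : NInterp := (fam (n - 1) k).1
/-- The structure `Gap_{n,k}`. -/
def GapNK (n k : ℕ) : NInterp := (fam (n - 1) k).2.1
/-- The structure `M_{n,k}`. -/
def MNK (n k : ℕ) : NInterp := (fam (n - 1) k).2.2.1
/-- The structure `N_{n,k}`. -/
def NNK (n k : ℕ) : NInterp := (fam (n - 1) k).2.2.2

/-- The `σ_n`-structure on the universe of an `NInterp`. -/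
def strOfN (n : ℕ) (I : NInterp) : (sig n).Structure I.Carrier :=
  strOf n I.toInterp


namespace S7


variable {M : Type*}

/-- prepend a block to a block-valuation -/
def bcons (ys : ℕ → M) (f : ℕ → ℕ → M) : ℕ → ℕ → M
  | 0 => ys
  | i + 1 => f i

@[simp] lemma bcons_zero (ys : ℕ → M) (f : ℕ → ℕ → M) : bcons ys f 0 = ys := rfl
@[simp] lemma bcons_succ (ys : ℕ → M) (f : ℕ → ℕ → M) (i : ℕ) : bcons ys f (i+1) = f i := rfl

noncomputable def junkf [Nonempty M] : ℕ → ℕ → M := fun _ _ => Classical.arbitrary M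

/-- semantics of an alternating prefix of `r` blocks, starting with ∃ if `b` -/
noncomputable def SemQ [Nonempty M] : ℕ → Bool → ((ℕ → ℕ → M) → Prop) → Prop
  | 0, _, P => P junkf
  | r + 1, true, P => ∃ ys : ℕ → M, SemQ r false (fun f => P (bcons ys f))
  | r + 1, false, P => ∀ ys : ℕ → M, SemQ r true (fun f => P (bcons ys f))

variable [Nonempty M]

lemma SemQ_ex {r : ℕ} {P : (ℕ → ℕ → M) → Prop} :
    SemQ (r + 1) true P ↔ ∃ ys : ℕ → M, SemQ r false (fun f => P (bcons ys f)) := Iff.rfl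

lemma SemQ_all {r : ℕ} {P : (ℕ → ℕ → M) → Prop} :
    SemQ (r + 1) false P ↔ ∀ ys : ℕ → M, SemQ r true (fun f => P (bcons ys f)) := Iff.rfl

lemma SemQ_mono : ∀ (r : ℕ) (b : Bool) {P Q : (ℕ → ℕ → M) → Prop},
    (∀ f, P f → Q f) → SemQ r b P → SemQ r b Q
  | 0, _, _, _, h, hP => h _ hP
  | r + 1, true, _, _, h, hP => by
      obtain ⟨ys, hy⟩ := hP
      exact ⟨ys, SemQ_mono r false (fun f hf => h _ hf) hy⟩
  | r + 1, false, _, _, h, hP => fun ys => SemQ_mono r true (fun f hf => h _ hf) (hP ys)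

lemma SemQ_congr {r : ℕ} {b : Bool} {P Q : (ℕ → ℕ → M) → Prop}
    (h : ∀ f, P f ↔ Q f) : SemQ r b P ↔ SemQ r b Q :=
  ⟨SemQ_mono r b fun f => (h f).1, SemQ_mono r b fun f => (h f).2⟩

lemma SemQ_of_forall : ∀ (r : ℕ) (b : Bool) {P : (ℕ → ℕ → M) → Prop},
    (∀ f, P f) → SemQ r b P
  | 0, _, _, h => h _
  | r + 1, true, _, h => ⟨fun _ => Classical.arbitrary M, SemQ_of_forall r false fun f => h _⟩
  | r + 1, false, _, h => fun _ => SemQ_of_forall r true fun f => h _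

lemma SemQ_elim_const : ∀ (r : ℕ) (b : Bool) {C : Prop} {P : (ℕ → ℕ → M) → Prop},
    SemQ r b (fun f => C ∧ P f) → C
  | 0, _, _, _, h => h.1
  | r + 1, true, _, _, h => by
      obtain ⟨ys, hy⟩ := h
      exact SemQ_elim_const r false hy
  | r + 1, false, _, _, h => SemQ_elim_const r true (h (fun _ => Classical.arbitrary M))

lemma SemQ_and_const {r : ℕ} {b : Bool} {C : Prop} {P : (ℕ → ℕ → M) → Prop} :
    SemQ r b (fun f => C ∧ P f) ↔ C ∧ SemQ r b P := by
  constructor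
  · intro h
    exact ⟨SemQ_elim_const r b h, SemQ_mono r b (fun f hf => hf.2) h⟩
  · rintro ⟨hC, h⟩
    exact SemQ_mono r b (fun f hf => ⟨hC, hf⟩) h

lemma SemQ_imp_const {r : ℕ} {b : Bool} {C : Prop} {P : (ℕ → ℕ → M) → Prop} :
    SemQ r b (fun f => C → P f) ↔ (C → SemQ r b P) := by
  constructor
  · intro h hC
    exact SemQ_mono r b (fun f hf => hf hC) h
  · intro h
    by_cases hC : C
    · exact SemQ_mono r b (fun f hf _ => hf) (h hC)
    · exact SemQ_of_forall r b (fun f hC' => absurd hC' hC)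

lemma SemQ_succ_drop : ∀ (r : ℕ) (b : Bool) {P : (ℕ → ℕ → M) → Prop},
    (∀ f g, (∀ i, i < r → f i = g i) → P f → P g) → (SemQ (r + 1) b P ↔ SemQ r b P)
  | 0, true, P, h => by
      simp only [SemQ]
      constructor
      · rintro ⟨ys, hy⟩; exact h _ _ (fun i hi => absurd hi (Nat.not_lt_zero i)) hy
      · intro hP; exact ⟨fun _ => Classical.arbitrary M,
          h _ _ (fun i hi => absurd hi (Nat.not_lt_zero i)) hP⟩
  | 0, false, P, h => by
      simp only [SemQ]
      constructor
      · intro hy; exact h _ _ (fun i hi => absurd hi (Nat.not_lt_zero i))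
          (hy (fun _ => Classical.arbitrary M))
      · intro hP ys; exact h _ _ (fun i hi => absurd hi (Nat.not_lt_zero i)) hP
  | r + 1, true, P, h => by
      rw [SemQ_ex, SemQ_ex]
      refine exists_congr fun ys => SemQ_succ_drop r false ?_
      intro f g hfg hP
      refine h _ _ ?_ hP
      intro i hi
      cases i with
      | zero => rfl
      | succ i => exact hfg i (by omega)
  | r + 1, false, P, h => by
      rw [SemQ_all, SemQ_all]
      refine forall_congr' fun ys => SemQ_succ_drop r true ?_
      intro f g hfg hP
      refine h _ _ ?_ hP
      intro i hi
      cases i with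
      | zero => rfl
      | succ i => exact hfg i (by omega)

lemma SemQ_drop (e : ℕ) {r : ℕ} {b : Bool} {P : (ℕ → ℕ → M) → Prop}
    (h : ∀ f g, (∀ i, i < r → f i = g i) → P f → P g) : SemQ (r + e) b P ↔ SemQ r b P := by
  induction e with
  | zero => rfl
  | succ e ih =>
      refine (SemQ_succ_drop (r + e) b ?_).trans ih
      intro f g hfg hP
      exact h f g (fun i hi => hfg i (by omega)) hP

lemma SemQ_shift : ∀ (r : ℕ) (b : Bool) (σ : ℕ → ℕ → ℕ)
    (_ : ∀ i, Function.Injective (σ i)) (P : (ℕ → ℕ → M) → Prop),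
    SemQ r b (fun f => P (fun i t => f i (σ i t))) ↔ SemQ r b P
  | 0, b, σ, hσ, P => by
      cases b <;> exact Iff.rfl
  | r + 1, true, σ, hσ, P => by
      rw [SemQ_ex, SemQ_ex]
      have key : ∀ (ys : ℕ → M) (f : ℕ → ℕ → M),
          (fun i t => (bcons ys f) i (σ i t)) =
            bcons (fun t => ys (σ 0 t)) (fun j t => f j (σ (j+1) t)) := by
        intro ys f; funext i t; cases i <;> rfl
      have ihg : ∀ ys' : ℕ → M, SemQ r false
            (fun f => P (bcons ys' (fun j t => f j (σ (j+1) t)))) ↔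
          SemQ r false (fun f => P (bcons ys' f)) :=
        fun ys' => SemQ_shift r false (fun j => σ (j+1)) (fun j => hσ (j+1))
          (fun g => P (bcons ys' g))
      constructor
      · rintro ⟨ys, hy⟩
        refine ⟨fun t => ys (σ 0 t), (ihg _).1 ?_⟩
        exact SemQ_mono r false (fun f hf => by rw [key] at hf; exact hf) hy
      · rintro ⟨ys', hy⟩
        refine ⟨fun t => ys' (Function.invFun (σ 0) t), ?_⟩
        have hys : (fun t => ys' (Function.invFun (σ 0) (σ 0 t))) = ys' :=
          funext fun t => by rw [Function.leftInverse_invFun (hσ 0)]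
        refine SemQ_mono r false (fun f hf => ?_) ((ihg ys').2 hy)
        rw [key]
        exact (congrArg (fun w => P (bcons w (fun j t => f j (σ (j+1) t)))) hys).mpr hf
  | r + 1, false, σ, hσ, P => by
      rw [SemQ_all, SemQ_all]
      have key : ∀ (ys : ℕ → M) (f : ℕ → ℕ → M),
          (fun i t => (bcons ys f) i (σ i t)) =
            bcons (fun t => ys (σ 0 t)) (fun j t => f j (σ (j+1) t)) := by
        intro ys f; funext i t; cases i <;> rfl
      have ihg : ∀ ys' : ℕ → M, SemQ r true
            (fun f => P (bcons ys' (fun j t => f j (σ (j+1) t)))) ↔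
          SemQ r true (fun f => P (bcons ys' f)) :=
        fun ys' => SemQ_shift r true (fun j => σ (j+1)) (fun j => hσ (j+1))
          (fun g => P (bcons ys' g))
      constructor
      · intro h ys'
        have hys : (fun t => ys' (Function.invFun (σ 0) (σ 0 t))) = ys' :=
          funext fun t => by rw [Function.leftInverse_invFun (hσ 0)]
        refine (ihg ys').1 ?_
        have := h (fun t => ys' (Function.invFun (σ 0) t))
        refine SemQ_mono r true (fun f hf => ?_) this
        rw [key] at hf
        exact (congrArg (fun w => P (bcons w (fun j t => f j (σ (j+1) t)))) hys).mp hf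
      · intro h ys
        have := (ihg (fun t => ys (σ 0 t))).2 (h (fun t => ys (σ 0 t)))
        exact SemQ_mono r true (fun f hf => by rw [key]; exact hf) this

/-- dependence of a block-predicate on a zone -/
def DepOn (P : (ℕ → ℕ → M) → Prop) (Z : ℕ → ℕ → Prop) : Prop :=
  ∀ f g, (∀ i t, Z i t → f i t = g i t) → P f → P g

lemma SemQ_or_merge : ∀ (r : ℕ) (b : Bool) {P₁ P₂ : (ℕ → ℕ → M) → Prop}
    {Z₁ Z₂ : ℕ → ℕ → Prop}, DepOn P₁ Z₁ → DepOn P₂ Z₂ →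
    (∀ i t, (i % 2 = if b then 1 else 0) → ¬(Z₁ i t ∧ Z₂ i t)) →
    (SemQ r b (fun f => P₁ f ∨ P₂ f) ↔ SemQ r b P₁ ∨ SemQ r b P₂)
  | 0, _, _, _, _, _, _, _, _ => Iff.rfl
  | r + 1, true, P₁, P₂, Z₁, Z₂, h₁, h₂, hd => by
      simp only [SemQ]
      rw [← exists_or]
      refine exists_congr fun ys => ?_
      refine SemQ_or_merge r false (Z₁ := fun i t => Z₁ (i+1) t) (Z₂ := fun i t => Z₂ (i+1) t)
        ?_ ?_ ?_
      · intro f g hfg hP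
        refine h₁ _ _ ?_ hP
        intro i t hZ
        cases i with
        | zero => rfl
        | succ i => exact hfg i t hZ
      · intro f g hfg hP
        refine h₂ _ _ ?_ hP
        intro i t hZ
        cases i with
        | zero => rfl
        | succ i => exact hfg i t hZ
      · intro i t hi
        exact hd (i+1) t (by simp at hi ⊢; omega)
  | r + 1, false, P₁, P₂, Z₁, Z₂, h₁, h₂, hd => by
      simp only [SemQ]
      have inner : ∀ ys, SemQ r true (fun f => P₁ (bcons ys f) ∨ P₂ (bcons ys f)) ↔
          SemQ r true (fun f => P₁ (bcons ys f)) ∨ SemQ r true (fun f => P₂ (bcons ys f)) := by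
        intro ys
        refine SemQ_or_merge r true (Z₁ := fun i t => Z₁ (i+1) t) (Z₂ := fun i t => Z₂ (i+1) t)
          ?_ ?_ ?_
        · intro f g hfg hP
          refine h₁ _ _ ?_ hP
          intro i t hZ
          cases i with
          | zero => rfl
          | succ i => exact hfg i t hZ
        · intro f g hfg hP
          refine h₂ _ _ ?_ hP
          intro i t hZ
          cases i with
          | zero => rfl
          | succ i => exact hfg i t hZ
        · intro i t hi
          exact hd (i+1) t (by simp at hi ⊢; omega)
      constructor
      · intro h
        by_cases hA : ∀ ys, SemQ r true (fun f => P₁ (bcons ys f))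
        · exact Or.inl hA
        · push_neg at hA
          obtain ⟨ys₁, hy₁⟩ := hA
          refine Or.inr fun ys₂ => ?_
          classical
          set ys : ℕ → M := fun t => if Z₁ 0 t then ys₁ t else ys₂ t with hys
          rcases (inner ys).1 (h ys) with hc | hc
          · exfalso
            refine hy₁ (SemQ_mono r true (fun f hf => ?_) hc)
            refine h₁ _ _ ?_ hf
            intro i t hZ
            cases i with
            | zero => simp only [bcons_zero, hys]; rw [if_pos hZ]
            | succ i => rfl
          · refine SemQ_mono r true (fun f hf => ?_) hc
            refine h₂ _ _ ?_ hf
            intro i t hZ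
            cases i with
            | zero =>
                simp only [bcons_zero, hys]
                rw [if_neg (fun hZ1 => hd 0 t (by simp) ⟨hZ1, hZ⟩)]
            | succ i => rfl
      · intro h ys
        rcases h with h | h
        · exact (inner ys).2 (Or.inl (h ys))
        · exact (inner ys).2 (Or.inr (h ys))


section PartB

variable {L : FirstOrder.Language} {A : Type*} [L.Structure A]

/-- append for valuations -/
def fapp {ℓ s : ℕ} (xs : Fin ℓ → A) (ys : Fin s → A) : Fin (ℓ + s) → A :=
  fun i => if h : i.1 < ℓ then xs ⟨i.1, h⟩ else ys ⟨i.1 - ℓ, by have := i.2; omega⟩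

lemma fapp_zero {ℓ : ℕ} (xs : Fin ℓ → A) (ys : Fin 0 → A) : fapp xs ys = xs :=
  funext fun i => by simp [fapp, i.isLt]

lemma snoc_fapp {ℓ s : ℕ} (xs : Fin ℓ → A) (ys : Fin s → A) (a : A) :
    Fin.snoc (fapp xs ys) a = fapp xs (Fin.snoc ys a) := by
  funext i
  refine Fin.lastCases ?_ (fun j => ?_) i
  · rw [Fin.snoc_last]
    show _ = fapp xs (Fin.snoc ys a) (Fin.last (ℓ + s))
    simp only [fapp, Fin.last]
    rw [dif_neg (by omega)]
    have h2 : (⟨ℓ + s - ℓ, by omega⟩ : Fin (s + 1)) = Fin.last s := by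
      apply Fin.ext; simp
    rw [h2, Fin.snoc_last]
  · rw [Fin.snoc_castSucc]
    show fapp xs ys j = fapp xs (Fin.snoc ys a) (Fin.castSucc j)
    by_cases h : j.1 < ℓ
    · simp only [fapp, Fin.coe_castSucc]
      rw [dif_pos h, dif_pos h]
    · simp only [fapp, Fin.coe_castSucc]
      rw [dif_neg h, dif_neg h]
      have h3 : (⟨j.1 - ℓ, by have hj : j.1 < ℓ + s := j.2; omega⟩ : Fin (s + 1)) =
          Fin.castSucc ⟨j.1 - ℓ, by have hj : j.1 < ℓ + s := j.2; omega⟩ := rfl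
      rw [h3, Fin.snoc_castSucc]

lemma realize_exN : ∀ (j : ℕ) {m : ℕ} (φ : L.BoundedFormula Empty (m + j))
    (v : Empty → A) (xs : Fin m → A),
    (exN j φ).Realize v xs ↔ ∃ ys : Fin j → A, φ.Realize v (fapp xs ys)
  | 0, m, φ, v, xs => by
      constructor
      · intro h
        exact ⟨fun i => i.elim0, by rwa [fapp_zero]⟩
      · rintro ⟨ys, h⟩
        rwa [fapp_zero] at h
  | j + 1, m, φ, v, xs => by
      have := realize_exN j (m := m) φ.ex v xs
      rw [show exN (j+1) φ = exN j φ.ex from rfl, this]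
      constructor
      · rintro ⟨ys, h⟩
        rw [BoundedFormula.realize_ex] at h
        obtain ⟨a, ha⟩ := h
        exact ⟨Fin.snoc ys a, by rwa [snoc_fapp] at ha⟩
      · rintro ⟨ys, h⟩
        refine ⟨Fin.init ys, ?_⟩
        rw [BoundedFormula.realize_ex]
        refine ⟨ys (Fin.last j), ?_⟩
        rw [snoc_fapp, Fin.snoc_init_self]
        exact h

lemma realize_allN : ∀ (j : ℕ) {m : ℕ} (φ : L.BoundedFormula Empty (m + j))
    (v : Empty → A) (xs : Fin m → A),
    (allN j φ).Realize v xs ↔ ∀ ys : Fin j → A, φ.Realize v (fapp xs ys)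
  | 0, m, φ, v, xs => by
      constructor
      · intro h ys
        rwa [fapp_zero]
      · intro h
        have := h fun i => i.elim0
        rwa [fapp_zero] at this
  | j + 1, m, φ, v, xs => by
      have := realize_allN j (m := m) φ.all v xs
      rw [show allN (j+1) φ = allN j φ.all from rfl, this]
      constructor
      · intro h ys
        have := h (Fin.init ys)
        rw [BoundedFormula.realize_all] at this
        have := this (ys (Fin.last j))
        rwa [snoc_fapp, Fin.snoc_init_self] at this
      · intro h ys
        rw [BoundedFormula.realize_all]
        intro a
        rw [snoc_fapp]
        exact h _

/-- context size after `r` blocks of size `s` -/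
def ctxq : ℕ → ℕ → ℕ → ℕ
  | 0, _, ℓ => ℓ
  | r + 1, s, ℓ => ctxq r s (ℓ + s)

lemma ctxq_eq : ∀ (r s ℓ : ℕ), ctxq r s ℓ = ℓ + r * s
  | 0, s, ℓ => by simp [ctxq]
  | r + 1, s, ℓ => by rw [ctxq, ctxq_eq r s (ℓ + s)]; ring

/-- an alternating prefix of `r` blocks of `s` quantifiers -/
def qBlocks : (r : ℕ) → (b : Bool) → (s ℓ : ℕ) →
    L.BoundedFormula Empty (ctxq r s ℓ) → L.BoundedFormula Empty ℓ
  | 0, _, _, _, φ => φ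
  | r + 1, true, s, ℓ, φ => exN s (qBlocks r false s (ℓ + s) φ)
  | r + 1, false, s, ℓ, φ => allN s (qBlocks r true s (ℓ + s) φ)

lemma isSigmaPi_qBlocks {k : ℕ} : ∀ (r : ℕ) (b : Bool) (s ℓ : ℕ)
    (φ : L.BoundedFormula Empty (ctxq r s ℓ)), s ≤ k → φ.IsQF →
    IsSigmaPi k b r ℓ (qBlocks r b s ℓ φ)
  | 0, b, s, ℓ, φ, hk, hφ => by cases b <;> exact hφ
  | r + 1, true, s, ℓ, φ, hk, hφ => by
      exact Or.inr ⟨s, hk, qBlocks r false s (ℓ + s) φ,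
        isSigmaPi_qBlocks r false s (ℓ + s) φ hk hφ, rfl⟩
  | r + 1, false, s, ℓ, φ, hk, hφ => by
      exact Or.inr ⟨s, hk, qBlocks r true s (ℓ + s) φ,
        isSigmaPi_qBlocks r true s (ℓ + s) φ hk hφ, rfl⟩

variable [Nonempty A]

def combineV (s ℓ : ℕ) (xs : Fin ℓ → A) (f : ℕ → ℕ → A) (idx : ℕ) : A :=
  if h : idx < ℓ then xs ⟨idx, h⟩ else f ((idx - ℓ) / s) ((idx - ℓ) % s)

lemma combineV_step {s ℓ : ℕ} (hs : 0 < s) (xs : Fin ℓ → A) (ys : ℕ → A) (f : ℕ → ℕ → A) :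
    (fun idx => combineV s ℓ xs (bcons ys f) idx) =
      fun idx => combineV s (ℓ + s) (fapp xs (fun t : Fin s => ys t.1)) f idx := by
  funext idx
  simp only [combineV, fapp]
  by_cases h1 : idx < ℓ
  · rw [dif_pos h1, dif_pos (by omega : idx < ℓ + s), dif_pos h1]
  · rw [dif_neg h1]
    by_cases h2 : idx < ℓ + s
    · rw [dif_pos h2, dif_neg h1]
      have hd : (idx - ℓ) / s = 0 := Nat.div_eq_of_lt (by omega)
      have hm : (idx - ℓ) % s = idx - ℓ := Nat.mod_eq_of_lt (by omega)
      rw [hd, hm]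
      rfl
    · rw [dif_neg h2]
      have e1 : idx - ℓ = (idx - (ℓ + s)) + s := by omega
      have hd : (idx - ℓ) / s = (idx - (ℓ + s)) / s + 1 := by
        rw [e1, Nat.add_div_right _ hs]
      have hm : (idx - ℓ) % s = (idx - (ℓ + s)) % s := by rw [e1, Nat.add_mod_right]
      rw [hd, hm]
      rfl

lemma realize_qBlocks {s : ℕ} (hs : 0 < s) : ∀ (r : ℕ) (b : Bool) (ℓ : ℕ)
    (φ : L.BoundedFormula Empty (ctxq r s ℓ)) (v : Empty → A) (xs : Fin ℓ → A),
    (qBlocks r b s ℓ φ).Realize v xs ↔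
      SemQ r b (fun f => φ.Realize v (fun idx => combineV s ℓ xs f idx.1))
  | 0, b, ℓ, φ, v, xs => by
      have hval : (fun idx : Fin (ctxq 0 s ℓ) => combineV s ℓ xs (junkf (M := A)) idx.1) = xs :=
        funext fun idx => by
          have hlt : idx.1 < ℓ := idx.2
          simp [combineV, hlt]
          rfl
      cases b
      · exact (iff_of_eq (congrArg (φ.Realize v) hval)).symm
      · exact (iff_of_eq (congrArg (φ.Realize v) hval)).symm
  | r + 1, true, ℓ, φ, v, xs => by
      have ihg : ∀ ys' : ℕ → A,
          (qBlocks r false s (ℓ + s) φ).Realize v (fapp xs (fun t : Fin s => ys' t.1)) ↔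
            SemQ r false (fun f => φ.Realize v
              (fun idx => combineV s (ℓ + s) (fapp xs (fun t : Fin s => ys' t.1)) f idx.1)) :=
        fun ys' => realize_qBlocks hs r false (ℓ + s) φ v _
      have hval2 : ∀ (ys' : ℕ → A) (f : ℕ → ℕ → A),
          (fun idx : Fin (ctxq r s (ℓ + s)) => combineV s ℓ xs (bcons ys' f) idx.1) =
            (fun idx : Fin (ctxq r s (ℓ + s)) =>
              combineV s (ℓ + s) (fapp xs (fun t : Fin s => ys' t.1)) f idx.1) :=
        fun ys' f => funext fun idx => congrFun (combineV_step hs xs ys' f) idx.1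
      rw [show qBlocks (r+1) true s ℓ φ = exN s (qBlocks r false s (ℓ + s) φ) from rfl,
        realize_exN, SemQ_ex]
      constructor
      · rintro ⟨ys, h⟩
        refine ⟨fun t => if ht : t < s then ys ⟨t, ht⟩ else Classical.arbitrary A, ?_⟩
        set ys' : ℕ → A := fun t => if ht : t < s then ys ⟨t, ht⟩ else Classical.arbitrary A
          with hys'
        have hy : (fun t : Fin s => ys' t.1) = ys := by
          funext t; simp [hys', t.isLt]
        have h2 := (ihg ys').1 (by rw [hy]; exact h)
        refine SemQ_mono r false (fun f hf => ?_) h2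
        exact (iff_of_eq (congrArg (φ.Realize v) (hval2 ys' f))).mpr hf
      · rintro ⟨ys', h⟩
        refine ⟨fun t => ys' t.1, (ihg ys').2 (SemQ_mono r false (fun f hf => ?_) h)⟩
        exact (iff_of_eq (congrArg (φ.Realize v) (hval2 ys' f))).mp hf
  | r + 1, false, ℓ, φ, v, xs => by
      have ihg : ∀ ys' : ℕ → A,
          (qBlocks r true s (ℓ + s) φ).Realize v (fapp xs (fun t : Fin s => ys' t.1)) ↔
            SemQ r true (fun f => φ.Realize v
              (fun idx => combineV s (ℓ + s) (fapp xs (fun t : Fin s => ys' t.1)) f idx.1)) :=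
        fun ys' => realize_qBlocks hs r true (ℓ + s) φ v _
      have hval2 : ∀ (ys' : ℕ → A) (f : ℕ → ℕ → A),
          (fun idx : Fin (ctxq r s (ℓ + s)) => combineV s ℓ xs (bcons ys' f) idx.1) =
            (fun idx : Fin (ctxq r s (ℓ + s)) =>
              combineV s (ℓ + s) (fapp xs (fun t : Fin s => ys' t.1)) f idx.1) :=
        fun ys' f => funext fun idx => congrFun (combineV_step hs xs ys' f) idx.1
      rw [show qBlocks (r+1) false s ℓ φ = allN s (qBlocks r true s (ℓ + s) φ) from rfl,
        realize_allN, SemQ_all]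
      constructor
      · intro h ys'
        have h2 := (ihg ys').1 (h (fun t : Fin s => ys' t.1))
        refine SemQ_mono r true (fun f hf => ?_) h2
        exact (iff_of_eq (congrArg (φ.Realize v) (hval2 ys' f))).mpr hf
      · intro h ys
        set ys' : ℕ → A := fun t => if ht : t < s then ys ⟨t, ht⟩ else Classical.arbitrary A
          with hys'
        have hy : (fun t : Fin s => ys' t.1) = ys := by
          funext t; simp [hys', t.isLt]
        have h2 := SemQ_mono r true (fun f hf =>
          (iff_of_eq (congrArg (φ.Realize v) (hval2 ys' f))).mp hf) (h ys')
        have h3 := (ihg ys').2 h2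
        rw [hy] at h3
        exact h3

end PartB
section PartC

/-! Matrix semantics and matrix formulas for `SomeTotalR`. -/

/-- block size at level `m` -/
def SZ : ℕ → ℕ
  | 0 => 7
  | m + 1 => 3 * SZ m + 13

lemma SZ_pos (m : ℕ) : 0 < SZ m := by cases m <;> simp [SZ] <;> omega

variable {M : Type*}

/-- interval-constraint semantics of a list of pairs -/
def dsemI (I : Interp M) {N : ℕ} (ps : List (Fin N × Fin N)) (xs : Fin N → M) : M → Prop :=
  fun z => ∀ p ∈ ps, I.le (xs p.1) z ∧ I.le z (xs p.2)

lemma dsemI_append (I : Interp M) {N : ℕ} (ps : List (Fin N × Fin N)) (xs : Fin N → M)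
    (a b : Fin N) : dsemI I (ps ++ [(a, b)]) xs =
      fun z => dsemI I ps xs z ∧ I.le (xs a) z ∧ I.le z (xs b) := by
  funext z
  apply propext
  constructor
  · intro h
    exact ⟨fun p hp => h p (by simp [hp]), (h (a, b) (by simp)).1, (h (a, b) (by simp)).2⟩
  · rintro ⟨h1, h2, h3⟩ p hp
    rcases List.mem_append.1 hp with hp | hp
    · exact h1 p hp
    · rw [List.mem_singleton] at hp
      subst hp
      exact ⟨h2, h3⟩

/-- the matrix semantics of the prenex form of `SomeTotalR` at level `m` -/
def MatSem (I : Interp M) : ℕ → (M → Prop) → (ℕ → ℕ → M) → Prop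
  | 0, D, f =>
      (D (f 0 0) ∧ D (f 0 1) ∧ I.S (f 0 0) (f 0 1) ∧
        (¬ I.lt (f 0 0) (f 0 1) ∨ (D (f 0 4) ∧ I.lt (f 0 0) (f 0 4) ∧ I.lt (f 0 4) (f 0 1)))) ∨
      (D (f 0 2) ∧ D (f 0 3) ∧ I.R (f 0 2) (f 0 3) ∧ I.lt (f 0 2) (f 0 3) ∧
        ((D (f 1 0) ∧ I.le (f 0 2) (f 1 0) ∧ I.lt (f 1 0) (f 0 3)) →
          (D (f 2 0) ∧ I.lt (f 1 0) (f 2 0) ∧ I.le (f 2 0) (f 0 3) ∧ I.S (f 1 0) (f 2 0))))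
  | m + 1, D, f =>
      (D (f 0 0) ∧ D (f 0 3) ∧
        (I.Pn (m + 2) (f 0 0) ∧ I.Pn (m + 2) (f 0 3) ∧ I.Sn (m + 2) (f 0 0) (f 0 3) ∧
          (I.le (f 0 0) (f 0 3) ∧
            MatSem I m (fun u => D u ∧ I.le (f 0 0) u ∧ I.le u (f 0 3))
              (fun i t => f i (3 * t + 1)))) ∧
        D (f 0 6) ∧ I.Pn (m + 2) (f 0 6) ∧ ¬ I.le (f 0 6) (f 0 0) ∧ ¬ I.le (f 0 3) (f 0 6)) ∨
      (D (f 0 9) ∧ D (f 0 12) ∧ I.Rn (m + 2) (f 0 9) (f 0 12) ∧ I.lt (f 0 9) (f 0 12) ∧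
        ((D (f 1 2) ∧ I.Pn (m + 2) (f 1 2) ∧ I.le (f 0 9) (f 1 2) ∧ I.lt (f 1 2) (f 0 12)) →
          (D (f 2 0) ∧ I.lt (f 1 2) (f 2 0) ∧ I.le (f 2 0) (f 0 12) ∧
            (I.Pn (m + 2) (f 1 2) ∧ I.Pn (m + 2) (f 2 0) ∧ I.Sn (m + 2) (f 1 2) (f 2 0) ∧
              (I.le (f 1 2) (f 2 0) ∧
                MatSem I m (fun u => D u ∧ I.le (f 1 2) u ∧ I.le u (f 2 0))
                  (fun i t => f (i + 2) (3 * t + 2)))))))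

lemma MatSem_congr (I : Interp M) : ∀ (m : ℕ) (D : M → Prop) (f g : ℕ → ℕ → M),
    (∀ i t, i ≤ 2 * m + 2 → t < SZ m → f i t = g i t) →
    (MatSem I m D f ↔ MatSem I m D g)
  | 0, D, f, g, h => by
      have e00 := h 0 0 (by omega) (by simp [SZ])
      have e01 := h 0 1 (by omega) (by simp [SZ])
      have e02 := h 0 2 (by omega) (by simp [SZ])
      have e03 := h 0 3 (by omega) (by simp [SZ])
      have e04 := h 0 4 (by omega) (by simp [SZ])
      have e10 := h 1 0 (by omega) (by simp [SZ])
      have e20 := h 2 0 (by omega) (by simp [SZ])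
      simp only [MatSem]
      rw [e00, e01, e02, e03, e04, e10, e20]
  | m + 1, D, f, g, h => by
      have e00 := h 0 0 (by omega) (by simp only [SZ]; omega)
      have e03 := h 0 3 (by omega) (by simp only [SZ]; omega)
      have e06 := h 0 6 (by omega) (by simp only [SZ]; omega)
      have e09 := h 0 9 (by omega) (by simp only [SZ]; omega)
      have e012 := h 0 12 (by omega) (by simp only [SZ]; omega)
      have e12 := h 1 2 (by omega) (by simp only [SZ]; omega)
      have e20 := h 2 0 (by omega) (by simp only [SZ]; omega)
      have ih1 := MatSem_congr I m (fun u => D u ∧ I.le (g 0 0) u ∧ I.le u (g 0 3))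
        (fun i t => f i (3 * t + 1)) (fun i t => g i (3 * t + 1))
        (fun i t hi ht => h i (3 * t + 1) (by omega) (by simp only [SZ]; omega))
      have ih2 := MatSem_congr I m (fun u => D u ∧ I.le (g 1 2) u ∧ I.le u (g 2 0))
        (fun i t => f (i + 2) (3 * t + 2)) (fun i t => g (i + 2) (3 * t + 2))
        (fun i t hi ht => h (i + 2) (3 * t + 2) (by omega) (by simp only [SZ]; omega))
      simp only [MatSem]
      rw [e00, e03, e06, e09, e012, e12, e20, ih1, ih2]

end PartC

section Formulas

variable {n : ℕ}

/-- term for a bounded variable -/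
def tv {N : ℕ} (i : Fin N) : (sig n).Term (Empty ⊕ Fin N) := Term.var (Sum.inr i)

def fLe {N : ℕ} (a b : Fin N) : (sig n).BoundedFormula Empty N :=
  (leSym n).boundedFormula₂ (tv a) (tv b)

def fS {N : ℕ} (a b : Fin N) : (sig n).BoundedFormula Empty N :=
  (sSym n).boundedFormula₂ (tv a) (tv b)

def fR {N : ℕ} (a b : Fin N) : (sig n).BoundedFormula Empty N :=
  (rSym n).boundedFormula₂ (tv a) (tv b)

def fLt {N : ℕ} (a b : Fin N) : (sig n).BoundedFormula Empty N :=
  fLe a b ⊓ ∼((tv a).bdEqual (tv b))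

def fPn {N : ℕ} (i : ℕ) (h : 2 ≤ i ∧ i ≤ n) (a : Fin N) : (sig n).BoundedFormula Empty N :=
  (pnSym n i h).boundedFormula₁ (tv a)

def fSn {N : ℕ} (i : ℕ) (h : 2 ≤ i ∧ i ≤ n) (a b : Fin N) : (sig n).BoundedFormula Empty N :=
  (snSym n i h).boundedFormula₂ (tv a) (tv b)

def fRn {N : ℕ} (i : ℕ) (h : 2 ≤ i ∧ i ≤ n) (a b : Fin N) : (sig n).BoundedFormula Empty N :=
  (rnSym n i h).boundedFormula₂ (tv a) (tv b)

def fD {N : ℕ} (ps : List (Fin N × Fin N)) (u : Fin N) : (sig n).BoundedFormula Empty N :=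
  (ps.map (fun p => fLe p.1 u ⊓ fLe u p.2)).foldr (· ⊓ ·) ⊤

lemma isQF_fLe {N : ℕ} (a b : Fin N) : (fLe (n := n) a b).IsQF :=
  (BoundedFormula.IsAtomic.rel _ _).isQF
lemma isQF_fS {N : ℕ} (a b : Fin N) : (fS (n := n) a b).IsQF :=
  (BoundedFormula.IsAtomic.rel _ _).isQF
lemma isQF_fR {N : ℕ} (a b : Fin N) : (fR (n := n) a b).IsQF :=
  (BoundedFormula.IsAtomic.rel _ _).isQF
lemma isQF_fLt {N : ℕ} (a b : Fin N) : (fLt (n := n) a b).IsQF :=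
  (isQF_fLe a b).inf (BoundedFormula.IsAtomic.equal _ _).isQF.not
lemma isQF_fPn {N : ℕ} (i : ℕ) (h : 2 ≤ i ∧ i ≤ n) (a : Fin N) : (fPn i h a).IsQF :=
  (BoundedFormula.IsAtomic.rel _ _).isQF
lemma isQF_fSn {N : ℕ} (i : ℕ) (h : 2 ≤ i ∧ i ≤ n) (a b : Fin N) : (fSn i h a b).IsQF :=
  (BoundedFormula.IsAtomic.rel _ _).isQF
lemma isQF_fRn {N : ℕ} (i : ℕ) (h : 2 ≤ i ∧ i ≤ n) (a b : Fin N) : (fRn i h a b).IsQF :=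
  (BoundedFormula.IsAtomic.rel _ _).isQF
lemma isQF_fD {N : ℕ} (ps : List (Fin N × Fin N)) (u : Fin N) : (fD (n := n) ps u).IsQF := by
  rw [fD]
  induction ps with
  | nil => exact BoundedFormula.IsQF.top
  | cons p ps ih => exact ((isQF_fLe p.1 u).inf (isQF_fLe u p.2)).inf ih

variable {A : Type*} [(sig n).Structure A] {v : Empty → A} {N : ℕ} {xs : Fin N → A}

lemma realize_fLe {a b : Fin N} :
    (fLe (n := n) a b).Realize v xs ↔ (interpOf n A).le (xs a) (xs b) := by
  simp [fLe, tv, BoundedFormula.realize_rel₂, interpOf]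

lemma realize_fS {a b : Fin N} :
    (fS (n := n) a b).Realize v xs ↔ (interpOf n A).S (xs a) (xs b) := by
  simp [fS, tv, BoundedFormula.realize_rel₂, interpOf]

lemma realize_fR {a b : Fin N} :
    (fR (n := n) a b).Realize v xs ↔ (interpOf n A).R (xs a) (xs b) := by
  simp [fR, tv, BoundedFormula.realize_rel₂, interpOf]

lemma realize_fLt {a b : Fin N} :
    (fLt (n := n) a b).Realize v xs ↔ (interpOf n A).lt (xs a) (xs b) := by
  simp [fLt, tv, Interp.lt, BoundedFormula.realize_inf, BoundedFormula.realize_not,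
    BoundedFormula.realize_bdEqual, realize_fLe, Ne]

lemma realize_fPn {i : ℕ} {h : 2 ≤ i ∧ i ≤ n} {a : Fin N} :
    (fPn i h a).Realize v xs ↔ (interpOf n A).Pn i (xs a) := by
  have base : (fPn i h a).Realize v xs ↔
      Structure.RelMap (pnSym n i h) ![xs a] := by
    simp [fPn, tv, BoundedFormula.realize_rel₁]
  rw [base]
  exact ⟨fun hr => ⟨h, hr⟩, fun ⟨h', hr⟩ => hr⟩

lemma realize_fSn {i : ℕ} {h : 2 ≤ i ∧ i ≤ n} {a b : Fin N} :
    (fSn i h a b).Realize v xs ↔ (interpOf n A).Sn i (xs a) (xs b) := by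
  have base : (fSn i h a b).Realize v xs ↔
      Structure.RelMap (snSym n i h) ![xs a, xs b] := by
    simp [fSn, tv, BoundedFormula.realize_rel₂]
  rw [base]
  exact ⟨fun hr => ⟨h, hr⟩, fun ⟨h', hr⟩ => hr⟩

lemma realize_fRn {i : ℕ} {h : 2 ≤ i ∧ i ≤ n} {a b : Fin N} :
    (fRn i h a b).Realize v xs ↔ (interpOf n A).Rn i (xs a) (xs b) := by
  have base : (fRn i h a b).Realize v xs ↔
      Structure.RelMap (rnSym n i h) ![xs a, xs b] := by
    simp [fRn, tv, BoundedFormula.realize_rel₂]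
  rw [base]
  exact ⟨fun hr => ⟨h, hr⟩, fun ⟨h', hr⟩ => hr⟩

lemma realize_fD {ps : List (Fin N × Fin N)} {u : Fin N} :
    (fD (n := n) ps u).Realize v xs ↔ dsemI (interpOf n A) ps xs (xs u) := by
  rw [fD, BoundedFormula.realize_foldr_inf]
  constructor
  · intro h p hp
    have := h _ (List.mem_map.2 ⟨p, hp, rfl⟩)
    rw [BoundedFormula.realize_inf, realize_fLe, realize_fLe] at this
    exact this
  · intro h φ hφ
    obtain ⟨p, hp, rfl⟩ := List.mem_map.1 hφ
    rw [BoundedFormula.realize_inf, realize_fLe, realize_fLe]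
    exact h p hp

end Formulas

/-- the matrix formula -/
def MatF : (n m : ℕ) → (m + 1 ≤ n) → (N : ℕ) → List (Fin N × Fin N) → (ℕ → ℕ → Fin N) →
    (sig n).BoundedFormula Empty N
  | n, 0, _, N, ps, pos =>
      ((fD ps (pos 0 0) ⊓ (fD ps (pos 0 1) ⊓ (fS (pos 0 0) (pos 0 1) ⊓ ((∼(fLt (pos 0 0) (pos 0 1))) ⊔ (fD ps (pos 0 4) ⊓ (fLt (pos 0 0) (pos 0 4) ⊓ fLt (pos 0 4) (pos 0 1))))))) ⊔ (fD ps (pos 0 2) ⊓ (fD ps (pos 0 3) ⊓ (fR (pos 0 2) (pos 0 3) ⊓ (fLt (pos 0 2) (pos 0 3) ⊓ ((fD ps (pos 1 0) ⊓ (fLe (pos 0 2) (pos 1 0) ⊓ fLt (pos 1 0) (pos 0 3))) ⟹ (fD ps (pos 2 0) ⊓ (fLt (pos 1 0) (pos 2 0) ⊓ (fLe (pos 2 0) (pos 0 3) ⊓ fS (pos 1 0) (pos 2 0))))))))))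
  | n, m + 1, h, N, ps, pos =>
      ((fD ps (pos 0 0) ⊓ (fD ps (pos 0 3) ⊓ ((fPn (m+2) ⟨by omega, h⟩ (pos 0 0) ⊓ (fPn (m+2) ⟨by omega, h⟩ (pos 0 3) ⊓ (fSn (m+2) ⟨by omega, h⟩ (pos 0 0) (pos 0 3) ⊓ (fLe (pos 0 0) (pos 0 3) ⊓ MatF n m (by omega) N (ps ++ [((pos 0 0), (pos 0 3))]) (fun i t => pos i (3 * t + 1)))))) ⊓ (fD ps (pos 0 6) ⊓ (fPn (m+2) ⟨by omega, h⟩ (pos 0 6) ⊓ ((∼(fLe (pos 0 6) (pos 0 0))) ⊓ (∼(fLe (pos 0 3) (pos 0 6))))))))) ⊔ (fD ps (pos 0 9) ⊓ (fD ps (pos 0 12) ⊓ (fRn (m+2) ⟨by omega, h⟩ (pos 0 9) (pos 0 12) ⊓ (fLt (pos 0 9) (pos 0 12) ⊓ ((fD ps (pos 1 2) ⊓ (fPn (m+2) ⟨by omega, h⟩ (pos 1 2) ⊓ (fLe (pos 0 9) (pos 1 2) ⊓ fLt (pos 1 2) (pos 0 12)))) ⟹ (fD ps (pos 2 0) ⊓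 (fLt (pos 1 2) (pos 2 0) ⊓ (fLe (pos 2 0) (pos 0 12) ⊓ (fPn (m+2) ⟨by omega, h⟩ (pos 1 2) ⊓ (fPn (m+2) ⟨by omega, h⟩ (pos 2 0) ⊓ (fSn (m+2) ⟨by omega, h⟩ (pos 1 2) (pos 2 0) ⊓ (fLe (pos 1 2) (pos 2 0) ⊓ MatF n m (by omega) N (ps ++ [((pos 1 2), (pos 2 0))]) (fun i t => pos (i + 2) (3 * t + 2)))))))))))))))

lemma isQF_MatF : ∀ (n m : ℕ) (h : m + 1 ≤ n) (N : ℕ) (ps : List (Fin N × Fin N))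
    (pos : ℕ → ℕ → Fin N), (MatF n m h N ps pos).IsQF
  | n, 0, h, N, ps, pos => by
      refine BoundedFormula.IsQF.sup ?_ ?_ <;>
        repeat
          first
          | exact BoundedFormula.isQF_bot
          | exact isQF_fD _ _
          | exact isQF_fLe _ _
          | exact isQF_fLt _ _
          | exact isQF_fS _ _
          | exact isQF_fR _ _
          | apply BoundedFormula.IsQF.inf
          | apply BoundedFormula.IsQF.imp
          | apply BoundedFormula.IsQF.not
          | apply BoundedFormula.IsQF.sup
  | n, m + 1, h, N, ps, pos => by
      have ih1 := isQF_MatF n m (by omega) N (ps ++ [(pos 0 0, pos 0 3)])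
        (fun i t => pos i (3 * t + 1))
      have ih2 := isQF_MatF n m (by omega) N (ps ++ [(pos 1 2, pos 2 0)])
        (fun i t => pos (i + 2) (3 * t + 2))
      refine BoundedFormula.IsQF.sup ?_ ?_ <;>
        repeat
          first
          | exact ih1
          | exact ih2
          | exact BoundedFormula.isQF_bot
          | exact isQF_fD _ _
          | exact isQF_fLe _ _
          | exact isQF_fLt _ _
          | exact isQF_fPn _ _ _
          | exact isQF_fSn _ _ _ _
          | exact isQF_fRn _ _ _ _
          | apply BoundedFormula.IsQF.inf
          | apply BoundedFormula.IsQF.imp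
          | apply BoundedFormula.IsQF.not
          | apply BoundedFormula.IsQF.sup

lemma realize_MatF : ∀ (n m : ℕ) (h : m + 1 ≤ n) (N : ℕ) (ps : List (Fin N × Fin N))
    (pos : ℕ → ℕ → Fin N) (A : Type*) (inst : (sig n).Structure A) (v : Empty → A)
    (xs : Fin N → A),
    (MatF n m h N ps pos).Realize v xs ↔
      MatSem (interpOf n A) m (dsemI (interpOf n A) ps xs) (fun i t => xs (pos i t))
  | n, 0, h, N, ps, pos, A, inst, v, xs => by
      simp only [MatF, MatSem, BoundedFormula.realize_sup, BoundedFormula.realize_inf,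
        BoundedFormula.realize_imp, BoundedFormula.realize_not, realize_fD, realize_fLe,
        realize_fLt, realize_fS, realize_fR]
  | n, m + 1, h, N, ps, pos, A, inst, v, xs => by
      have ih1 := realize_MatF n m (by omega) N (ps ++ [(pos 0 0, pos 0 3)])
        (fun i t => pos i (3 * t + 1)) A inst v xs
      have ih2 := realize_MatF n m (by omega) N (ps ++ [(pos 1 2, pos 2 0)])
        (fun i t => pos (i + 2) (3 * t + 2)) A inst v xs
      rw [dsemI_append] at ih1 ih2
      simp only [MatF, MatSem, BoundedFormula.realize_sup, BoundedFormula.realize_inf,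
        BoundedFormula.realize_imp, BoundedFormula.realize_not, realize_fD, realize_fLe,
        realize_fLt, realize_fPn, realize_fSn, realize_fRn, ih1, ih2]

section Level

variable {M : Type*} [Nonempty M]

def P01 (I : Interp M) (D : M → Prop) (f : ℕ → ℕ → M) : Prop :=
  D (f 0 0) ∧ D (f 0 1) ∧ I.S (f 0 0) (f 0 1) ∧
    (¬ I.lt (f 0 0) (f 0 1) ∨ (D (f 0 4) ∧ I.lt (f 0 0) (f 0 4) ∧ I.lt (f 0 4) (f 0 1)))

def P02 (I : Interp M) (D : M → Prop) (f : ℕ → ℕ → M) : Prop :=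
  D (f 0 2) ∧ D (f 0 3) ∧ I.R (f 0 2) (f 0 3) ∧ I.lt (f 0 2) (f 0 3) ∧
    ((D (f 1 0) ∧ I.le (f 0 2) (f 1 0) ∧ I.lt (f 1 0) (f 0 3)) →
      (D (f 2 0) ∧ I.lt (f 1 0) (f 2 0) ∧ I.le (f 2 0) (f 0 3) ∧ I.S (f 1 0) (f 2 0)))

lemma side01 (I : Interp M) (D : M → Prop) :
    SemQ 3 true (P01 I D) ↔
      ∃ x y, D x ∧ D y ∧ I.S x y ∧ (¬ I.lt x y ∨ ∃ z, D z ∧ I.lt x z ∧ I.lt z y) := by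
  have hdep : ∀ f g : ℕ → ℕ → M, (∀ i, i < 1 → f i = g i) → P01 I D f → P01 I D g := by
    intro f g h hP
    have e : f 0 = g 0 := h 0 (by omega)
    simp only [P01] at hP ⊢
    rw [← e]
    exact hP
  have h1 : SemQ 3 true (P01 I D) ↔ SemQ 1 true (P01 I D) := SemQ_drop 2 hdep
  rw [h1]
  constructor
  · rintro ⟨ys, hy⟩
    have hy' : P01 I D (bcons ys junkf) := hy
    exact ⟨ys 0, ys 1, hy'.1, hy'.2.1, hy'.2.2.1,
      hy'.2.2.2.elim Or.inl (fun hz => Or.inr ⟨ys 4, hz⟩)⟩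
  · rintro ⟨x, y, hx, hy, hs, hor⟩
    rcases hor with hlt | ⟨z, hz1, hz2, hz3⟩
    · exact ⟨fun c => if c = 0 then x else if c = 1 then y else Classical.arbitrary M,
        hx, hy, hs, Or.inl hlt⟩
    · exact ⟨fun c => if c = 0 then x else if c = 1 then y else z,
        hx, hy, hs, Or.inr ⟨hz1, hz2, hz3⟩⟩

lemma side02 (I : Interp M) (D : M → Prop) :
    SemQ 3 true (P02 I D) ↔
      ∃ x y, D x ∧ D y ∧ I.R x y ∧ I.lt x y ∧
        (∀ z, (D z ∧ I.le x z ∧ I.lt z y) →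
          ∃ w, D w ∧ I.lt z w ∧ I.le w y ∧ I.S z w) := by
  constructor
  · rintro ⟨ys, hy⟩
    have hy' : SemQ 2 false (fun f => D (ys 2) ∧ D (ys 3) ∧ I.R (ys 2) (ys 3) ∧
        I.lt (ys 2) (ys 3) ∧
        ((D (f 0 0) ∧ I.le (ys 2) (f 0 0) ∧ I.lt (f 0 0) (ys 3)) →
          (D (f 1 0) ∧ I.lt (f 0 0) (f 1 0) ∧ I.le (f 1 0) (ys 3) ∧
            I.S (f 0 0) (f 1 0)))) := hy
    obtain ⟨h1, hrest⟩ := SemQ_and_const.1 hy'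
    obtain ⟨h2, hrest⟩ := SemQ_and_const.1 hrest
    obtain ⟨h3, hrest⟩ := SemQ_and_const.1 hrest
    obtain ⟨h4, hrest⟩ := SemQ_and_const.1 hrest
    refine ⟨ys 2, ys 3, h1, h2, h3, h4, fun z hz => ?_⟩
    have hz2 : SemQ 1 true (fun f =>
        (D z ∧ I.le (ys 2) z ∧ I.lt z (ys 3)) →
          (D (f 0 0) ∧ I.lt z (f 0 0) ∧ I.le (f 0 0) (ys 3) ∧ I.S z (f 0 0))) :=
      hrest (fun _ => z)
    obtain ⟨ys₂, hw⟩ := SemQ_imp_const.1 hz2 hz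
    exact ⟨ys₂ 0, hw⟩
  · rintro ⟨x, y, hx, hy, hr, hlt, hall⟩
    refine ⟨fun c => if c = 2 then x else if c = 3 then y else Classical.arbitrary M, ?_⟩
    show SemQ 2 false (fun f => D x ∧ D y ∧ I.R x y ∧ I.lt x y ∧
      ((D (f 0 0) ∧ I.le x (f 0 0) ∧ I.lt (f 0 0) y) →
        (D (f 1 0) ∧ I.lt (f 0 0) (f 1 0) ∧ I.le (f 1 0) y ∧ I.S (f 0 0) (f 1 0))))
    refine SemQ_and_const.2 ⟨hx, ?_⟩
    refine SemQ_and_const.2 ⟨hy, ?_⟩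
    refine SemQ_and_const.2 ⟨hr, ?_⟩
    refine SemQ_and_const.2 ⟨hlt, ?_⟩
    intro ys₁
    show SemQ 1 true (fun f =>
      (D (ys₁ 0) ∧ I.le x (ys₁ 0) ∧ I.lt (ys₁ 0) y) →
        (D (f 0 0) ∧ I.lt (ys₁ 0) (f 0 0) ∧ I.le (f 0 0) y ∧ I.S (ys₁ 0) (f 0 0)))
    refine SemQ_imp_const.2 (fun hant => ?_)
    obtain ⟨w, hw⟩ := hall (ys₁ 0) hant
    exact ⟨fun _ => w, hw⟩

lemma level0 (I : Interp M) (D : M → Prop) :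
    SemQ 3 true (fun f => MatSem I 0 D f) ↔ STR I 0 D := by
  classical
  have hunfold : (fun f : ℕ → ℕ → M => MatSem I 0 D f) =
      (fun f => P01 I D f ∨ P02 I D f) := rfl
  rw [hunfold]
  have dep1 : DepOn (P01 I D) (fun i _ => i = 0) := by
    intro f g hfg hP
    have e : f 0 = g 0 := funext fun t => hfg 0 t rfl
    simp only [P01] at hP ⊢
    rw [← e]
    exact hP
  have dep2 : DepOn (P02 I D) (fun i t => i = 0 ∨ ((i = 1 ∨ i = 2) ∧ t = 0)) := by
    intro f g hfg hP
    have e0 : f 0 = g 0 := funext fun t => hfg 0 t (Or.inl rfl)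
    have e10 : f 1 0 = g 1 0 := hfg 1 0 (Or.inr ⟨Or.inl rfl, rfl⟩)
    have e20 : f 2 0 = g 2 0 := hfg 2 0 (Or.inr ⟨Or.inr rfl, rfl⟩)
    simp only [P02] at hP ⊢
    rw [← e0, ← e10, ← e20]
    exact hP
  rw [SemQ_or_merge 3 true dep1 dep2 (by
    intro i t hi h
    obtain ⟨h1, _⟩ := h
    subst h1
    simp at hi)]
  rw [side01, side02]
  show _ ↔ ((¬ ∀ x y, D x → D y → I.S x y →
      (I.lt x y ∧ ∀ z, D z → ¬(I.lt x z ∧ I.lt z y))) ∨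
    ∃ x y, D x ∧ D y ∧ I.R x y ∧
      (I.lt x y ∧ ∀ z, D z → I.le x z → I.lt z y →
        ∃ w, D w ∧ I.lt z w ∧ I.le w y ∧ I.S z w))
  refine or_congr ?_ ?_
  · constructor
    · rintro ⟨x, y, hx, hy, hs, hc⟩ hall
      obtain ⟨hlt, hz⟩ := hall x y hx hy hs
      rcases hc with h | ⟨z, hz1, hz2, hz3⟩
      · exact h hlt
      · exact hz z hz1 ⟨hz2, hz3⟩
    · intro hn
      by_contra hc
      push_neg at hc
      apply hn
      intro x y hx hy hs
      obtain ⟨h1, h2⟩ := hc x y hx hy hs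
      exact ⟨h1, fun z hz hp => h2 z hz hp.1 hp.2⟩
  · constructor
    · rintro ⟨x, y, h1, h2, h3, h4, h5⟩
      exact ⟨x, y, h1, h2, h3, h4, fun z hz hle hlt => h5 z ⟨hz, hle, hlt⟩⟩
    · rintro ⟨x, y, h1, h2, h3, h4, h5⟩
      exact ⟨x, y, h1, h2, h3, h4, fun z hz => h5 z hz.1 hz.2.1 hz.2.2⟩

end Level

section LevelStep

variable {M : Type*} [Nonempty M]

def PA (I : Interp M) (m : ℕ) (D : M → Prop) (f : ℕ → ℕ → M) : Prop :=
  D (f 0 0) ∧ D (f 0 3) ∧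
    (I.Pn (m + 2) (f 0 0) ∧ I.Pn (m + 2) (f 0 3) ∧ I.Sn (m + 2) (f 0 0) (f 0 3) ∧
      (I.le (f 0 0) (f 0 3) ∧
        MatSem I m (fun u => D u ∧ I.le (f 0 0) u ∧ I.le u (f 0 3))
          (fun i t => f i (3 * t + 1)))) ∧
    D (f 0 6) ∧ I.Pn (m + 2) (f 0 6) ∧ ¬ I.le (f 0 6) (f 0 0) ∧ ¬ I.le (f 0 3) (f 0 6)

def PB (I : Interp M) (m : ℕ) (D : M → Prop) (f : ℕ → ℕ → M) : Prop :=
  D (f 0 9) ∧ D (f 0 12) ∧ I.Rn (m + 2) (f 0 9) (f 0 12) ∧ I.lt (f 0 9) (f 0 12) ∧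
    ((D (f 1 2) ∧ I.Pn (m + 2) (f 1 2) ∧ I.le (f 0 9) (f 1 2) ∧ I.lt (f 1 2) (f 0 12)) →
      (D (f 2 0) ∧ I.lt (f 1 2) (f 2 0) ∧ I.le (f 2 0) (f 0 12) ∧
        (I.Pn (m + 2) (f 1 2) ∧ I.Pn (m + 2) (f 2 0) ∧ I.Sn (m + 2) (f 1 2) (f 2 0) ∧
          (I.le (f 1 2) (f 2 0) ∧
            MatSem I m (fun u => D u ∧ I.le (f 1 2) u ∧ I.le u (f 2 0))
              (fun i t => f (i + 2) (3 * t + 2))))))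

/-- the zone embedding that is the identity on block `0` -/
def sigZ (co : ℕ) : ℕ → ℕ → ℕ
  | 0, t => t
  | _ + 1, t => 3 * t + co

lemma sigZ_inj (co i : ℕ) : Function.Injective (sigZ co i) := by
  cases i with
  | zero => exact fun a b h => h
  | succ i => intro a b h; simp only [sigZ] at h; omega

lemma game_iff (I : Interp M) (m : ℕ) (D' : M → Prop) (co : ℕ)
    (ih : SemQ (2 * m + 3) true (fun f => MatSem I m D' f) ↔ STR I m D') :
    (∃ w₀ : ℕ → M, SemQ (2 * m + 2) false
        (fun f => MatSem I m D' (bcons w₀ (fun j t => f j (3 * t + co))))) ↔ STR I m D' := by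
  have hpt : ∀ (w₀ : ℕ → M) (f : ℕ → ℕ → M),
      (fun i t => (bcons w₀ f) i (sigZ co i t)) = bcons w₀ (fun j t => f j (3 * t + co)) := by
    intro w₀ f; funext i t; cases i <;> rfl
  have hsh := SemQ_shift (2 * m + 3) true (sigZ co) (sigZ_inj co)
    (fun g => MatSem I m D' g)
  constructor
  · rintro ⟨w₀, hw⟩
    refine ih.1 (hsh.1 ⟨w₀, SemQ_mono _ _ (fun f hf => ?_) hw⟩)
    show MatSem I m D' (fun i t => (bcons w₀ f) i (sigZ co i t))
    rw [hpt w₀ f]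
    exact hf
  · intro hstr
    obtain ⟨w₀, hw⟩ := hsh.2 (ih.2 hstr)
    refine ⟨w₀, SemQ_mono _ _ (fun f hf => ?_) hw⟩
    have hf' : MatSem I m D' (fun i t => (bcons w₀ f) i (sigZ co i t)) := hf
    rw [hpt w₀ f] at hf'
    exact hf'

lemma sideA (I : Interp M) (m : ℕ) (D : M → Prop)
    (ih : ∀ D' : M → Prop, SemQ (2 * m + 3) true (fun f => MatSem I m D' f) ↔ STR I m D') :
    SemQ (2 * m + 5) true (PA I m D) ↔
      ∃ x y, D x ∧ D y ∧
        (I.Pn (m + 2) x ∧ I.Pn (m + 2) y ∧ I.Sn (m + 2) x y ∧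
          (I.le x y ∧ STR I m (fun u => D u ∧ I.le x u ∧ I.le u y))) ∧
        ∃ z, D z ∧ I.Pn (m + 2) z ∧ ¬ I.le z x ∧ ¬ I.le y z := by
  have hkey : ∀ (ys₀ : ℕ → M) (f : ℕ → ℕ → M),
      (fun i t => (bcons ys₀ f) i (3 * t + 1)) =
        bcons (fun t => ys₀ (3 * t + 1)) (fun j t => f j (3 * t + 1)) := by
    intro ys₀ f; funext i t; cases i <;> rfl
  have hdrop : SemQ (2 * m + 5) true (PA I m D) ↔ SemQ (2 * m + 3) true (PA I m D) := by
    refine SemQ_drop 2 ?_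
    intro f g h hP
    simp only [PA] at hP ⊢
    have e0 : f 0 = g 0 := h 0 (by omega)
    rw [← e0]
    have hc : MatSem I m (fun u => D u ∧ I.le (f 0 0) u ∧ I.le u (f 0 3))
        (fun i t => g i (3 * t + 1)) ↔
        MatSem I m (fun u => D u ∧ I.le (f 0 0) u ∧ I.le u (f 0 3))
          (fun i t => f i (3 * t + 1)) :=
      MatSem_congr I m _ _ _ (fun i t hi ht => (congrFun (h i (by omega)) (3 * t + 1)).symm)
    rw [hc]
    exact hP
  rw [hdrop]
  constructor
  · rintro ⟨ys₀, hy⟩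
    have hy' : SemQ (2 * m + 2) false (fun f =>
        D (ys₀ 0) ∧ D (ys₀ 3) ∧
          (I.Pn (m + 2) (ys₀ 0) ∧ I.Pn (m + 2) (ys₀ 3) ∧ I.Sn (m + 2) (ys₀ 0) (ys₀ 3) ∧
            (I.le (ys₀ 0) (ys₀ 3) ∧
              MatSem I m (fun u => D u ∧ I.le (ys₀ 0) u ∧ I.le u (ys₀ 3))
                (bcons (fun t => ys₀ (3 * t + 1)) (fun j t => f j (3 * t + 1))))) ∧
          D (ys₀ 6) ∧ I.Pn (m + 2) (ys₀ 6) ∧ ¬ I.le (ys₀ 6) (ys₀ 0) ∧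
            ¬ I.le (ys₀ 3) (ys₀ 6)) := by
      refine SemQ_mono _ _ (fun f hf => ?_) hy
      have hf' : PA I m D (bcons ys₀ f) := hf
      simp only [PA] at hf'
      rw [hkey ys₀ f] at hf'
      exact hf'
    have hre : SemQ (2 * m + 2) false (fun f =>
        (D (ys₀ 0) ∧ D (ys₀ 3) ∧ I.Pn (m + 2) (ys₀ 0) ∧ I.Pn (m + 2) (ys₀ 3) ∧
          I.Sn (m + 2) (ys₀ 0) (ys₀ 3) ∧ I.le (ys₀ 0) (ys₀ 3) ∧ D (ys₀ 6) ∧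
          I.Pn (m + 2) (ys₀ 6) ∧ ¬ I.le (ys₀ 6) (ys₀ 0) ∧ ¬ I.le (ys₀ 3) (ys₀ 6)) ∧
        MatSem I m (fun u => D u ∧ I.le (ys₀ 0) u ∧ I.le u (ys₀ 3))
          (bcons (fun t => ys₀ (3 * t + 1)) (fun j t => f j (3 * t + 1)))) :=
      SemQ_mono _ _ (fun f hf => by tauto) hy'
    obtain ⟨hC, hgame⟩ := SemQ_and_const.1 hre
    obtain ⟨hc1, hc2, hc3, hc4, hc5, hc6, hc7, hc8, hc9, hc10⟩ := hC
    have hstr := (game_iff I m _ 1 (ih _)).1 ⟨fun t => ys₀ (3 * t + 1), hgame⟩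
    exact ⟨ys₀ 0, ys₀ 3, hc1, hc2, ⟨hc3, hc4, hc5, hc6, hstr⟩, ys₀ 6, hc7, hc8, hc9, hc10⟩
  · rintro ⟨x, y, hx, hy, ⟨hp1, hp2, hsn, hle, hstr⟩, z, hz, hpz, hn1, hn2⟩
    obtain ⟨w₀, hw⟩ := (game_iff I m (fun u => D u ∧ I.le x u ∧ I.le u y) 1 (ih _)).2 hstr
    classical
    refine ⟨fun c => if c = 0 then x else if c = 3 then y else if c = 6 then z
      else if c % 3 = 1 then w₀ ((c - 1) / 3) else Classical.arbitrary M, ?_⟩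
    set ys₀ : ℕ → M := fun c => if c = 0 then x else if c = 3 then y else if c = 6 then z
      else if c % 3 = 1 then w₀ ((c - 1) / 3) else Classical.arbitrary M with hys₀
    have hw0 : (fun t => ys₀ (3 * t + 1)) = w₀ := by
      funext t
      have e1 : ¬(3 * t + 1 = 0) := by omega
      have e2 : ¬(3 * t + 1 = 3) := by omega
      have e3 : ¬(3 * t + 1 = 6) := by omega
      have e4 : (3 * t + 1) % 3 = 1 := by omega
      have e5 : (3 * t + 1 - 1) / 3 = t := by omega
      simp only [hys₀, if_neg e1, if_neg e2, if_neg e3, if_pos e4, e5]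
    refine SemQ_mono _ _ (fun f hf => ?_) hw
    show PA I m D (bcons ys₀ f)
    simp only [PA]
    refine ⟨hx, hy, ⟨hp1, hp2, hsn, hle, ?_⟩, hz, hpz, hn1, hn2⟩
    show MatSem I m _ (fun i t => (bcons ys₀ f) i (3 * t + 1))
    rw [hkey ys₀ f, hw0]
    exact hf

lemma sideB (I : Interp M) (m : ℕ) (D : M → Prop)
    (ih : ∀ D' : M → Prop, SemQ (2 * m + 3) true (fun f => MatSem I m D' f) ↔ STR I m D') :
    SemQ (2 * m + 5) true (PB I m D) ↔
      ∃ x y, D x ∧ D y ∧ I.Rn (m + 2) x y ∧ I.lt x y ∧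
        (∀ z, (D z ∧ I.Pn (m + 2) z ∧ I.le x z ∧ I.lt z y) →
          ∃ w, D w ∧ I.lt z w ∧ I.le w y ∧
            (I.Pn (m + 2) z ∧ I.Pn (m + 2) w ∧ I.Sn (m + 2) z w ∧
              (I.le z w ∧ STR I m (fun u => D u ∧ I.le z u ∧ I.le u w)))) := by
  classical
  have hkey : ∀ (ys₂ : ℕ → M) (f : ℕ → ℕ → M),
      (fun i t => (bcons ys₂ f) i (3 * t + 2)) =
        bcons (fun t => ys₂ (3 * t + 2)) (fun j t => f j (3 * t + 2)) := by
    intro ys₂ f; funext i t; cases i <;> rfl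
  constructor
  · rintro ⟨ys₀, hy⟩
    have hy' : SemQ (2 * m + 4) false (fun f =>
        D (ys₀ 9) ∧ D (ys₀ 12) ∧ I.Rn (m + 2) (ys₀ 9) (ys₀ 12) ∧ I.lt (ys₀ 9) (ys₀ 12) ∧
          ((D (f 0 2) ∧ I.Pn (m + 2) (f 0 2) ∧ I.le (ys₀ 9) (f 0 2) ∧
              I.lt (f 0 2) (ys₀ 12)) →
            (D (f 1 0) ∧ I.lt (f 0 2) (f 1 0) ∧ I.le (f 1 0) (ys₀ 12) ∧
              (I.Pn (m + 2) (f 0 2) ∧ I.Pn (m + 2) (f 1 0) ∧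
                I.Sn (m + 2) (f 0 2) (f 1 0) ∧
                (I.le (f 0 2) (f 1 0) ∧
                  MatSem I m (fun u => D u ∧ I.le (f 0 2) u ∧ I.le u (f 1 0))
                    (fun i t => f (i + 1) (3 * t + 2))))))) := hy
    obtain ⟨h1, hrest⟩ := SemQ_and_const.1 hy'
    obtain ⟨h2, hrest⟩ := SemQ_and_const.1 hrest
    obtain ⟨h3, hrest⟩ := SemQ_and_const.1 hrest
    obtain ⟨h4, hrest⟩ := SemQ_and_const.1 hrest
    refine ⟨ys₀ 9, ys₀ 12, h1, h2, h3, h4, fun z hant => ?_⟩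
    have h5 : SemQ (2 * m + 3) true (fun f =>
        (D z ∧ I.Pn (m + 2) z ∧ I.le (ys₀ 9) z ∧ I.lt z (ys₀ 12)) →
          (D (f 0 0) ∧ I.lt z (f 0 0) ∧ I.le (f 0 0) (ys₀ 12) ∧
            (I.Pn (m + 2) z ∧ I.Pn (m + 2) (f 0 0) ∧ I.Sn (m + 2) z (f 0 0) ∧
              (I.le z (f 0 0) ∧
                MatSem I m (fun u => D u ∧ I.le z u ∧ I.le u (f 0 0))
                  (fun i t => f i (3 * t + 2)))))) := hrest (fun _ => z)
    have h6 := SemQ_imp_const.1 h5 hant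
    obtain ⟨ys₂, h7⟩ := h6
    have h7' : SemQ (2 * m + 2) false (fun f =>
        D (ys₂ 0) ∧ I.lt z (ys₂ 0) ∧ I.le (ys₂ 0) (ys₀ 12) ∧
          (I.Pn (m + 2) z ∧ I.Pn (m + 2) (ys₂ 0) ∧ I.Sn (m + 2) z (ys₂ 0) ∧
            (I.le z (ys₂ 0) ∧
              MatSem I m (fun u => D u ∧ I.le z u ∧ I.le u (ys₂ 0))
                (bcons (fun t => ys₂ (3 * t + 2)) (fun j t => f j (3 * t + 2)))))) := by
      refine SemQ_mono _ _ (fun f hf => ?_) h7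
      have hf' : D (ys₂ 0) ∧ I.lt z (ys₂ 0) ∧ I.le (ys₂ 0) (ys₀ 12) ∧
          (I.Pn (m + 2) z ∧ I.Pn (m + 2) (ys₂ 0) ∧ I.Sn (m + 2) z (ys₂ 0) ∧
            (I.le z (ys₂ 0) ∧
              MatSem I m (fun u => D u ∧ I.le z u ∧ I.le u (ys₂ 0))
                (fun i t => (bcons ys₂ f) i (3 * t + 2)))) := hf
      rw [hkey ys₂ f] at hf'
      exact hf'
    have hre : SemQ (2 * m + 2) false (fun f =>
        (D (ys₂ 0) ∧ I.lt z (ys₂ 0) ∧ I.le (ys₂ 0) (ys₀ 12) ∧ I.Pn (m + 2) z ∧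
          I.Pn (m + 2) (ys₂ 0) ∧ I.Sn (m + 2) z (ys₂ 0) ∧ I.le z (ys₂ 0)) ∧
        MatSem I m (fun u => D u ∧ I.le z u ∧ I.le u (ys₂ 0))
          (bcons (fun t => ys₂ (3 * t + 2)) (fun j t => f j (3 * t + 2)))) :=
      SemQ_mono _ _ (fun f hf => by tauto) h7'
    obtain ⟨hC, hgame⟩ := SemQ_and_const.1 hre
    obtain ⟨hc1, hc2, hc3, hc4, hc5, hc6, hc7⟩ := hC
    have hstr := (game_iff I m _ 2 (ih _)).1 ⟨fun t => ys₂ (3 * t + 2), hgame⟩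
    exact ⟨ys₂ 0, hc1, hc2, hc3, hc4, hc5, hc6, hc7, hstr⟩
  · rintro ⟨x, y, hx, hy, hrn, hlt, hall⟩
    refine ⟨fun c => if c = 9 then x else if c = 12 then y else Classical.arbitrary M, ?_⟩
    show SemQ (2 * m + 4) false (fun f =>
      D x ∧ D y ∧ I.Rn (m + 2) x y ∧ I.lt x y ∧
        ((D (f 0 2) ∧ I.Pn (m + 2) (f 0 2) ∧ I.le x (f 0 2) ∧ I.lt (f 0 2) y) →
          (D (f 1 0) ∧ I.lt (f 0 2) (f 1 0) ∧ I.le (f 1 0) y ∧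
            (I.Pn (m + 2) (f 0 2) ∧ I.Pn (m + 2) (f 1 0) ∧
              I.Sn (m + 2) (f 0 2) (f 1 0) ∧
              (I.le (f 0 2) (f 1 0) ∧
                MatSem I m (fun u => D u ∧ I.le (f 0 2) u ∧ I.le u (f 1 0))
                  (fun i t => f (i + 1) (3 * t + 2)))))))
    refine SemQ_and_const.2 ⟨hx, ?_⟩
    refine SemQ_and_const.2 ⟨hy, ?_⟩
    refine SemQ_and_const.2 ⟨hrn, ?_⟩
    refine SemQ_and_const.2 ⟨hlt, ?_⟩
    intro ys₁
    show SemQ (2 * m + 3) true (fun f =>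
      (D (ys₁ 2) ∧ I.Pn (m + 2) (ys₁ 2) ∧ I.le x (ys₁ 2) ∧ I.lt (ys₁ 2) y) →
        (D (f 0 0) ∧ I.lt (ys₁ 2) (f 0 0) ∧ I.le (f 0 0) y ∧
          (I.Pn (m + 2) (ys₁ 2) ∧ I.Pn (m + 2) (f 0 0) ∧ I.Sn (m + 2) (ys₁ 2) (f 0 0) ∧
            (I.le (ys₁ 2) (f 0 0) ∧
              MatSem I m (fun u => D u ∧ I.le (ys₁ 2) u ∧ I.le u (f 0 0))
                (fun i t => f i (3 * t + 2))))))
    refine SemQ_imp_const.2 (fun hant => ?_)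
    obtain ⟨w, hw1, hw2, hw3, hp1, hp2, hsn, hle, hstr⟩ := hall (ys₁ 2) hant
    obtain ⟨w₀, hw⟩ :=
      (game_iff I m (fun u => D u ∧ I.le (ys₁ 2) u ∧ I.le u w) 2 (ih _)).2 hstr
    refine ⟨fun c => if c = 0 then w else if c % 3 = 2 then w₀ ((c - 2) / 3)
      else Classical.arbitrary M, ?_⟩
    set ys₂ : ℕ → M := fun c => if c = 0 then w else if c % 3 = 2 then w₀ ((c - 2) / 3)
      else Classical.arbitrary M with hys₂
    have hw0 : (fun t => ys₂ (3 * t + 2)) = w₀ := by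
      funext t
      have e1 : ¬(3 * t + 2 = 0) := by omega
      have e2 : (3 * t + 2) % 3 = 2 := by omega
      have e3 : (3 * t + 2 - 2) / 3 = t := by omega
      simp only [hys₂, if_neg e1, if_pos e2, e3]
    refine SemQ_mono _ _ (fun f hf => ?_) hw
    show D (ys₂ 0) ∧ I.lt (ys₁ 2) (ys₂ 0) ∧ I.le (ys₂ 0) y ∧
      (I.Pn (m + 2) (ys₁ 2) ∧ I.Pn (m + 2) (ys₂ 0) ∧ I.Sn (m + 2) (ys₁ 2) (ys₂ 0) ∧
        (I.le (ys₁ 2) (ys₂ 0) ∧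
          MatSem I m (fun u => D u ∧ I.le (ys₁ 2) u ∧ I.le u (ys₂ 0))
            (fun i t => (bcons ys₂ f) i (3 * t + 2))))
    refine ⟨hw1, hw2, hw3, hp1, hp2, hsn, hle, ?_⟩
    rw [hkey ys₂ f, hw0]
    exact hf

end LevelStep

section LevelAll

variable {M : Type*} [Nonempty M]

lemma levelS (I : Interp M) (m : ℕ) (D : M → Prop)
    (ih : ∀ D' : M → Prop, SemQ (2 * m + 3) true (fun f => MatSem I m D' f) ↔ STR I m D') :
    SemQ (2 * m + 5) true (fun f => MatSem I (m + 1) D f) ↔ STR I (m + 1) D := by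
  classical
  have hunfold : (fun f : ℕ → ℕ → M => MatSem I (m + 1) D f) =
      (fun f => PA I m D f ∨ PB I m D f) := rfl
  rw [hunfold]
  have depA : DepOn (PA I m D) (fun i t => i = 0 ∨ (i ≤ 2 * m + 2 ∧ t % 3 = 1)) := by
    intro f g h hP
    simp only [PA] at hP ⊢
    have e0 : f 0 = g 0 := funext fun t => h 0 t (Or.inl rfl)
    rw [← e0]
    have hc : MatSem I m (fun u => D u ∧ I.le (f 0 0) u ∧ I.le u (f 0 3))
        (fun i t => g i (3 * t + 1)) ↔
        MatSem I m (fun u => D u ∧ I.le (f 0 0) u ∧ I.le u (f 0 3))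
          (fun i t => f i (3 * t + 1)) :=
      MatSem_congr I m _ _ _
        (fun i t hi ht => (h i (3 * t + 1) (Or.inr ⟨hi, by omega⟩)).symm)
    rw [hc]
    exact hP
  have depB : DepOn (PB I m D) (fun i t => i = 0 ∨ (i = 1 ∧ t = 2) ∨ (i = 2 ∧ t = 0) ∨
      (2 ≤ i ∧ t % 3 = 2)) := by
    intro f g h hP
    simp only [PB] at hP ⊢
    have e0 : f 0 = g 0 := funext fun t => h 0 t (Or.inl rfl)
    have e12 : f 1 2 = g 1 2 := h 1 2 (Or.inr (Or.inl ⟨rfl, rfl⟩))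
    have e20 : f 2 0 = g 2 0 := h 2 0 (Or.inr (Or.inr (Or.inl ⟨rfl, rfl⟩)))
    rw [← e0, ← e12, ← e20]
    have hc : MatSem I m (fun u => D u ∧ I.le (f 1 2) u ∧ I.le u (f 2 0))
        (fun i t => g (i + 2) (3 * t + 2)) ↔
        MatSem I m (fun u => D u ∧ I.le (f 1 2) u ∧ I.le u (f 2 0))
          (fun i t => f (i + 2) (3 * t + 2)) :=
      MatSem_congr I m _ _ _ (fun i t hi ht =>
        (h (i + 2) (3 * t + 2) (Or.inr (Or.inr (Or.inr ⟨by omega, by omega⟩)))).symm)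
    rw [hc]
    exact hP
  rw [SemQ_or_merge (2 * m + 5) true depA depB (by
    intro i t hi hz
    have hi2 : i % 2 = 1 := by simpa using hi
    clear hi
    obtain ⟨hz1, hz2⟩ := hz
    rcases hz1 with h1 | ⟨h1a, h1b⟩
    · omega
    · rcases hz2 with h2 | ⟨h2a, h2b⟩ | ⟨h2a, h2b⟩ | ⟨h2a, h2b⟩ <;> omega)]
  rw [sideA I m D ih, sideB I m D ih]
  show _ ↔ ((¬ ∀ x y, D x → D y →
      (I.Pn (m + 2) x ∧ I.Pn (m + 2) y ∧ I.Sn (m + 2) x y ∧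
        (I.le x y ∧ STR I m (fun u => D u ∧ I.le x u ∧ I.le u y))) →
      ∀ z, D z → I.Pn (m + 2) z → I.le z x ∨ I.le y z) ∨
    ∃ x y, D x ∧ D y ∧ I.Rn (m + 2) x y ∧
      (I.lt x y ∧ ∀ z, D z → I.Pn (m + 2) z → I.le x z → I.lt z y →
        ∃ w, D w ∧ I.lt z w ∧ I.le w y ∧
          (I.Pn (m + 2) z ∧ I.Pn (m + 2) w ∧ I.Sn (m + 2) z w ∧
            (I.le z w ∧ STR I m (fun u => D u ∧ I.le z u ∧ I.le u w)))))
  refine or_congr ?_ ?_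
  · constructor
    · rintro ⟨x, y, hx, hy, hsucc, z, hz, hpz, h1, h2⟩ hall
      rcases hall x y hx hy hsucc z hz hpz with h | h
      · exact h1 h
      · exact h2 h
    · intro hn
      by_contra hc
      push_neg at hc
      apply hn
      intro x y hx hy hs z hz hpz
      by_cases hle : I.le z x
      · exact Or.inl hle
      · exact Or.inr (hc x y hx hy hs z hz hpz hle)
  · constructor
    · rintro ⟨x, y, hx, hy, hrn, hlt, hall⟩
      exact ⟨x, y, hx, hy, hrn, hlt, fun z hz hpz hle hltz => hall z ⟨hz, hpz, hle, hltz⟩⟩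
    · rintro ⟨x, y, hx, hy, hrn, hlt, hall⟩
      exact ⟨x, y, hx, hy, hrn, hlt, fun z hz => hall z hz.1 hz.2.1 hz.2.2.1 hz.2.2.2⟩

lemma level (I : Interp M) : ∀ (m : ℕ) (D : M → Prop),
    SemQ (2 * m + 3) true (fun f => MatSem I m D f) ↔ STR I m D
  | 0, D => level0 I D
  | m + 1, D => levelS I m D (level I m)

end LevelAll

/-- the top-level position assignment -/
def posTop (r s : ℕ) (h : 0 < ctxq r s 0) : ℕ → ℕ → Fin (ctxq r s 0) := fun i t =>
  if hh : i * s + t < ctxq r s 0 then ⟨i * s + t, hh⟩ else ⟨0, h⟩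

lemma posTop_val {r s : ℕ} (h : 0 < ctxq r s 0) {i t : ℕ} (hi : i < r) (ht : t < s) :
    (posTop r s h i t).1 = i * s + t := by
  have hlt : i * s + t < ctxq r s 0 := by
    rw [ctxq_eq]
    have : (i + 1) * s ≤ r * s := Nat.mul_le_mul_right s (by omega)
    nlinarith [Nat.mul_le_mul_right s (show i + 1 ≤ r by omega)]
  rw [posTop, dif_pos hlt]

end S7

/-- for every n ≥ 1 the sentence `SomeTotalR_n` is logically equivalent to a
`Σ_{2n+1}` sentence. -/
theorem statement_7 (n : ℕ) (hn : 1 ≤ n) :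
    ∃ (k : ℕ) (ψ : (sig n).Sentence), IsSigma (2 * n + 1) k ψ ∧
      ∀ (A : Type) [(sig n).Structure A] [Nonempty A],
        A ⊨ ψ ↔ SomeTotalRSem n (interpOf n A) := by
  classical
  set m := n - 1 with hm
  set r := 2 * m + 3 with hr
  set s := S7.SZ m with hs
  have hspos : 0 < s := S7.SZ_pos m
  have hctx : 0 < S7.ctxq r s 0 := by
    rw [S7.ctxq_eq]
    have h1 : 0 < r := by omega
    have := Nat.mul_pos h1 hspos
    omega
  have hmn : m + 1 ≤ n := by omega
  set pos := S7.posTop r s hctx with hpos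
  set Φ := S7.MatF n m hmn (S7.ctxq r s 0) [] pos with hΦ
  refine ⟨s, S7.qBlocks r true s 0 Φ, ?_, ?_⟩
  · have h := S7.isSigmaPi_qBlocks r true s 0 Φ (le_refl s) (S7.isQF_MatF n m hmn _ [] pos)
    have he : 2 * n + 1 = r := by omega
    rw [he]
    exact h
  · intro A instA instNe
    show (S7.qBlocks r true s 0 Φ).Realize _ _ ↔ _
    rw [S7.realize_qBlocks hspos r true 0 Φ]
    have hmatf : ∀ f : ℕ → ℕ → A,
        Φ.Realize (default : Empty → A)
            (fun idx => S7.combineV s 0 (default : Fin 0 → A) f idx.1) ↔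
          S7.MatSem (interpOf n A) m (fun _ => True) f := by
      intro f
      rw [hΦ, S7.realize_MatF n m hmn _ [] pos A instA]
      have hD : S7.dsemI (interpOf n A) (N := S7.ctxq r s 0) []
          (fun idx : Fin (S7.ctxq r s 0) => S7.combineV s 0 (default : Fin 0 → A) f idx.1) =
          (fun _ : A => True) := by
        funext z
        apply propext
        simp [S7.dsemI]
      rw [hD]
      refine S7.MatSem_congr _ m _ _ _ ?_
      intro i t hi ht
      show S7.combineV s 0 (default : Fin 0 → A) f (pos i t).1 = f i t
      rw [hpos, S7.posTop_val hctx (by omega) ht]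
      rw [S7.combineV, dif_neg (by omega)]
      rw [Nat.sub_zero, show i * s + t = s * i + t by ring, Nat.mul_add_div hspos,
        Nat.mul_add_mod, Nat.div_eq_of_lt ht, Nat.mod_eq_of_lt ht, Nat.add_zero]
    rw [S7.SemQ_congr hmatf, hr]
    rw [S7.level (interpOf n A) m (fun _ => True)]
    exact Iff.rfl

end Paper
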